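/- arXiv:0905.2619 — 5 statements merged into one kernel-verified Lean document; each statement's English description precedes it below -/
import Mathlib

section
/- Let F : ℝ × ℂ → ℂ be three times continuously differentiable (in the real sense) and, for each fixed ρ ∈ ℝ, holomorphic in λ. Assume F(0, λ) = 0 for all λ ∈ ℂ, and let τ₀ ∈ ℝ, τ₀ ≠ 0, be such that ∂ρF(0, iτ₀) = 0 and ∂λ∂ρF(0, iτ₀) ≠ 0. Then there exist ρ₀ > 0 and a continuously differentiable function λ* : (−ρ₀, ρ₀) → ℂ with λ*(0) = iτ₀, F(ρ, λ*(ρ)) = 0 for all |ρ| < ρ₀, and (λ*)′(0) = −(1/2) ∂ρ²F(0, iτ₀) / ∂λ∂ρF(0, iτ₀). Moreover the branch is locally unique: there is δ > 0 such that if 0 < |ρ| < δ, |λ − iτ₀| < δ and F(ρ, λ) = 0, then λ = λ*(ρ). -/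
open Complex Metric

/-- Pointwise ℂ-linearity of the λ-derivative of a partially-holomorphic function. -/
lemma aux_clin (F : ℝ × ℂ → ℂ) (hF : Differentiable ℝ F)
    (hol : ∀ (ρ : ℝ) (lam : ℂ), DifferentiableAt ℂ (fun z => F (ρ, z)) lam)
    (p : ℝ × ℂ) (v : ℂ) :
    fderiv ℝ F p ((0 : ℝ), v) = v * fderiv ℝ F p ((0 : ℝ), (1 : ℂ)) := by
  set φ : ℂ → ℂ := fun z => F (p.1, z) with hφ
  have h1 : HasFDerivAt φ ((fderiv ℝ F p).comp (ContinuousLinearMap.inr ℝ ℝ ℂ)) p.2 := by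
    have := ((hF (p.1, p.2)).hasFDerivAt).comp p.2 (hasFDerivAt_prodMk_right p.1 p.2)
    exact this
  have h2 : HasFDerivAt φ ((fderiv ℂ φ p.2).restrictScalars ℝ) p.2 :=
    ((hol p.1 p.2).hasFDerivAt).restrictScalars ℝ
  have he := h1.unique h2
  have key : ∀ w : ℂ, fderiv ℝ F p ((0 : ℝ), w) = fderiv ℂ φ p.2 w := by
    intro w
    have := DFunLike.congr_fun he w
    simpa using this
  rw [key v, key 1]
  have : fderiv ℂ φ p.2 v = v • fderiv ℂ φ p.2 1 := by
    rw [← ContinuousLinearMap.map_smul, smul_eq_mul, mul_one]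
  simpa using this

/-- ℂ-linearity in the λ-slot of the second derivative, via symmetry of second derivatives. -/
lemma aux_sym (F : ℝ × ℂ → ℂ) (hF : ContDiff ℝ 3 F)
    (hol : ∀ (ρ : ℝ) (lam : ℂ), DifferentiableAt ℂ (fun z => F (ρ, z)) lam)
    (p₀ : ℝ × ℂ) (v : ℂ) :
    fderiv ℝ (fun p => fderiv ℝ F p ((1 : ℝ), (0 : ℂ))) p₀ ((0 : ℝ), v)
      = v * fderiv ℝ (fun p => fderiv ℝ F p ((1 : ℝ), (0 : ℂ))) p₀ ((0 : ℝ), (1 : ℂ)) := by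
  have hf' : ContDiff ℝ 2 (fderiv ℝ F) := hF.fderiv_right (by norm_num)
  have hdiff : DifferentiableAt ℝ (fderiv ℝ F) p₀ :=
    (hf'.differentiable (by norm_num)) p₀
  set f'' := fderiv ℝ (fderiv ℝ F) p₀ with hf''
  have hsym : IsSymmSndFDerivAt ℝ F p₀ := hF.contDiffAt.isSymmSndFDerivAt (by norm_num)
  have happly : ∀ (u w : ℝ × ℂ),
      fderiv ℝ (fun p => fderiv ℝ F p u) p₀ w = f'' w u := by
    intro u w
    have h := ((ContinuousLinearMap.apply ℝ ℂ u).hasFDerivAt.comp p₀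
      hdiff.hasFDerivAt).fderiv
    have : fderiv ℝ (fun p => fderiv ℝ F p u) p₀
        = (ContinuousLinearMap.apply ℝ ℂ u).comp f'' := h
    rw [this]; rfl
  have hc : DifferentiableAt ℝ (fun p => fderiv ℝ F p ((0:ℝ), (1:ℂ))) p₀ := by
    exact (hf'.clm_apply contDiff_const).differentiable (by norm_num) p₀
  calc fderiv ℝ (fun p => fderiv ℝ F p ((1 : ℝ), (0 : ℂ))) p₀ ((0 : ℝ), v)
      = f'' ((0:ℝ), v) ((1:ℝ), (0:ℂ)) := happly _ _
    _ = f'' ((1:ℝ), (0:ℂ)) ((0:ℝ), v) := hsym _ _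
    _ = fderiv ℝ (fun p => fderiv ℝ F p ((0:ℝ), v)) p₀ ((1:ℝ), (0:ℂ)) := (happly _ _).symm
    _ = fderiv ℝ (fun p => v * fderiv ℝ F p ((0:ℝ), (1:ℂ))) p₀ ((1:ℝ), (0:ℂ)) := by
        congr 1
        apply Filter.EventuallyEq.fderiv_eq
        filter_upwards with p using
          aux_clin F (hF.differentiable (by norm_num)) hol p v
    _ = v * fderiv ℝ (fun p => fderiv ℝ F p ((0:ℝ), (1:ℂ))) p₀ ((1:ℝ), (0:ℂ)) := by
        rw [fderiv_const_mul hc v]; rfl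
    _ = v * f'' ((1:ℝ), (0:ℂ)) ((0:ℝ), (1:ℂ)) := by rw [happly]
    _ = v * f'' ((0:ℝ), (1:ℂ)) ((1:ℝ), (0:ℂ)) := by rw [hsym]
    _ = v * fderiv ℝ (fun p => fderiv ℝ F p ((1 : ℝ), (0 : ℂ))) p₀ ((0 : ℝ), (1 : ℂ)) := by
        rw [happly]

/-- Hadamard / FTC factorization `F p = p.1 • ∫₀¹ ∂ρF (t p.1, p.2) dt`. -/
lemma aux_ftc (F : ℝ × ℂ → ℂ) (hF : ContDiff ℝ 3 F)
    (hF0 : ∀ lam : ℂ, F (0, lam) = 0) (p : ℝ × ℂ) :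
    F p = p.1 • ∫ t in (0:ℝ)..1, fderiv ℝ F (t * p.1, p.2) ((1:ℝ), (0:ℂ)) := by
  have hdF : Differentiable ℝ F := hF.differentiable (by norm_num)
  have hh : ContDiff ℝ 2 (fun q : ℝ × ℂ => fderiv ℝ F q ((1:ℝ), (0:ℂ))) :=
    (hF.fderiv_right (by norm_num)).clm_apply contDiff_const
  have hu : ∀ t ∈ Set.uIcc (0:ℝ) 1, HasDerivAt (fun s => F (s * p.1, p.2))
      (p.1 • fderiv ℝ F (t * p.1, p.2) ((1:ℝ), (0:ℂ))) t := by
    intro t _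
    have hγ : HasDerivAt (fun s : ℝ => (s * p.1, p.2)) ((p.1, (0:ℂ))) t :=
      (hasDerivAt_mul_const p.1).prodMk (hasDerivAt_const t p.2)
    have := (hdF (t * p.1, p.2)).hasFDerivAt.comp_hasDerivAt t hγ
    convert this using 1
    · rfl
    · rfl
    have : (p.1, (0:ℂ)) = p.1 • ((1:ℝ), (0:ℂ)) := by simp
    rw [this, ContinuousLinearMap.map_smul]
  have hint : IntervalIntegrable
      (fun t => p.1 • fderiv ℝ F (t * p.1, p.2) ((1:ℝ), (0:ℂ))) MeasureTheory.volume 0 1 := by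
    apply Continuous.intervalIntegrable
    exact (hh.continuous.comp (by fun_prop)).const_smul p.1
  have := intervalIntegral.integral_eq_sub_of_hasDerivAt hu hint
  rw [intervalIntegral.integral_smul] at this
  simp only [one_mul, zero_mul, hF0 p.2] at this
  rw [this, sub_zero]

/-- The linear reparametrization `(u, v) ↦ (t u, v)`. -/
noncomputable def auxJ (t : ℝ) : ℝ × ℂ →L[ℝ] ℝ × ℂ :=
  ((0 : ℝ × ℂ →L[ℝ] ℝ).prod (ContinuousLinearMap.snd ℝ ℝ ℂ))
    + t • ((ContinuousLinearMap.fst ℝ ℝ ℂ).prod (0 : ℝ × ℂ →L[ℝ] ℂ))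

lemma auxJ_apply (t : ℝ) (x : ℝ × ℂ) : auxJ t x = (t * x.1, x.2) := by
  simp [auxJ, Prod.ext_iff, mul_comm]

lemma auxJ_continuous : Continuous auxJ :=
  continuous_const.add (continuous_id.smul continuous_const)

/-- Differentiation under the integral sign for `x ↦ ∫₀¹ h (t x₁, x₂) dt`. -/
lemma aux_deriv (h : ℝ × ℂ → ℂ) (hh : ContDiff ℝ 2 h) (p : ℝ × ℂ) :
    HasFDerivAt (fun x : ℝ × ℂ => ∫ t in (0:ℝ)..1, h (t * x.1, x.2))
      (∫ t in (0:ℝ)..1, (fderiv ℝ h (t * p.1, p.2)).comp (auxJ t)) p := by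
  have hdh : Differentiable ℝ h := hh.differentiable (by norm_num)
  have hfc : Continuous (fderiv ℝ h) := hh.continuous_fderiv (by norm_num)
  have hΨ : Continuous (fun q : ℝ × (ℝ × ℂ) =>
      (fderiv ℝ h (q.1 * q.2.1, q.2.2)).comp (auxJ q.1)) := by
    apply Continuous.clm_comp
    · exact hfc.comp (by fun_prop)
    · exact auxJ_continuous.comp continuous_fst
  obtain ⟨C, hC⟩ := (isCompact_Icc.prod (isCompact_closedBall p 1)).exists_bound_of_continuousOn
    (hΨ.continuousOn (s := Set.Icc (0:ℝ) 1 ×ˢ closedBall p 1))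
  apply intervalIntegral.hasFDerivAt_integral_of_dominated_of_fderiv_le
    (F' := fun (x : ℝ × ℂ) (t : ℝ) => (fderiv ℝ h (t * x.1, x.2)).comp (auxJ t))
    (bound := fun _ => C) (s := ball p 1) (ball_mem_nhds p one_pos)
  · filter_upwards with x
    exact (Continuous.aestronglyMeasurable (by fun_prop : Continuous
      (fun t : ℝ => h (t * x.1, x.2))))
  · exact Continuous.intervalIntegrable
      (μ := MeasureTheory.volume)
      (by fun_prop : Continuous (fun t : ℝ => h (t * p.1, p.2))) 0 1
  · exact (hΨ.comp (continuous_id.prodMk continuous_const)).aestronglyMeasurable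
  · filter_upwards with t ht x hx
    have ht' : t ∈ Set.Icc (0:ℝ) 1 := by
      rw [Set.uIoc_of_le zero_le_one] at ht
      exact Set.mem_Icc_of_Ioc ht
    exact hC (t, x) ⟨ht', ball_subset_closedBall hx⟩
  · exact intervalIntegrable_const
  · filter_upwards with t _ x _
    have hbase := ((hdh (auxJ t x)).hasFDerivAt).comp x (auxJ t).hasFDerivAt
    have : (fun x : ℝ × ℂ => h (t * x.1, x.2)) = h ∘ auxJ t := by
      funext y; rw [Function.comp_apply, auxJ_apply]
    rw [this]
    rw [auxJ_apply] at hbase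
    exact hbase

/-- The Hadamard quotient is `C¹`. -/
lemma aux_G_contDiff (h : ℝ × ℂ → ℂ) (hh : ContDiff ℝ 2 h) :
    ContDiff ℝ 1 (fun x : ℝ × ℂ => ∫ t in (0:ℝ)..1, h (t * x.1, x.2)) := by
  rw [contDiff_one_iff_fderiv]
  have hd : ∀ p : ℝ × ℂ, HasFDerivAt (fun x : ℝ × ℂ => ∫ t in (0:ℝ)..1, h (t * x.1, x.2))
      (∫ t in (0:ℝ)..1, (fderiv ℝ h (t * p.1, p.2)).comp (auxJ t)) p := aux_deriv h hh
  refine ⟨fun p => (hd p).differentiableAt, ?_⟩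
  have : (fderiv ℝ (fun x : ℝ × ℂ => ∫ t in (0:ℝ)..1, h (t * x.1, x.2)))
      = fun p => ∫ t in (0:ℝ)..1, (fderiv ℝ h (t * p.1, p.2)).comp (auxJ t) := by
    funext p; exact (hd p).fderiv
  rw [this]
  apply intervalIntegral.continuous_parametric_intervalIntegral_of_continuous
    (μ := MeasureTheory.volume) _ continuous_const
  apply Continuous.clm_comp
  · exact (hh.continuous_fderiv (by norm_num)).comp (by fun_prop)
  · exact auxJ_continuous.comp continuous_snd

/-- Value of the derivative of the Hadamard quotient at a point with `ρ = 0`. -/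
lemma aux_fderiv_val (h : ℝ × ℂ → ℂ) (hh : ContDiff ℝ 2 h) (lam0 : ℂ) (u : ℝ) (v : ℂ) :
    fderiv ℝ (fun x : ℝ × ℂ => ∫ t in (0:ℝ)..1, h (t * x.1, x.2)) ((0:ℝ), lam0) (u, v)
      = (1/2 : ℝ) • (u • fderiv ℝ h ((0:ℝ), lam0) ((1:ℝ), (0:ℂ)))
        + fderiv ℝ h ((0:ℝ), lam0) ((0:ℝ), v) := by
  set A := fderiv ℝ h ((0:ℝ), lam0) with hA
  have hfd := (aux_deriv h hh ((0:ℝ), lam0)).fderiv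
  rw [hfd]
  have hsimp : (fun t : ℝ => (fderiv ℝ h (t * ((0:ℝ), lam0).1, ((0:ℝ), lam0).2)).comp (auxJ t))
      = fun t : ℝ => A.comp (auxJ t) := by
    funext t; simp [hA]
  rw [hsimp]
  have hint : IntervalIntegrable (fun t : ℝ => A.comp (auxJ t)) MeasureTheory.volume 0 1 :=
    (Continuous.clm_comp continuous_const auxJ_continuous).intervalIntegrable 0 1
  rw [ContinuousLinearMap.intervalIntegral_apply hint (u, v)]
  have hval : ∀ t : ℝ, (A.comp (auxJ t)) (u, v)
      = t • (u • A ((1:ℝ), (0:ℂ))) + A ((0:ℝ), v) := by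
    intro t
    have h1 : ((t * u : ℝ), v) = ((t*u : ℝ) • ((1:ℝ),(0:ℂ))) + ((0:ℝ), v) := by
      simp [Prod.ext_iff]
    rw [ContinuousLinearMap.comp_apply, auxJ_apply]
    simp only [h1, map_add, A.map_smul]
    rw [mul_smul]
  simp only [hval]
  rw [intervalIntegral.integral_add, intervalIntegral.integral_smul_const]
  · norm_num [integral_id]
  · exact Continuous.intervalIntegrable (μ := MeasureTheory.volume)
      (by fun_prop : Continuous (fun t : ℝ => t • (u • A ((1:ℝ), (0:ℂ))))) 0 1
  · exact intervalIntegrable_const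

/-- The invertible block-triangular derivative as a continuous linear equivalence. -/
noncomputable def auxEquiv (DG : ℝ × ℂ →L[ℝ] ℂ) (g a : ℂ) (ha : a ≠ 0)
    (hDG : ∀ (u : ℝ) (v : ℂ), DG (u, v) = u • g + v * a) : (ℝ × ℂ) ≃L[ℝ] (ℝ × ℂ) :=
  ContinuousLinearEquiv.equivOfInverse
    ((ContinuousLinearMap.fst ℝ ℝ ℂ).prod DG)
    ((ContinuousLinearMap.fst ℝ ℝ ℂ).prod
      (a⁻¹ • ((ContinuousLinearMap.snd ℝ ℝ ℂ) - (ContinuousLinearMap.fst ℝ ℝ ℂ).smulRight g)))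
    (by
      rintro ⟨u, v⟩
      refine Prod.ext rfl ?_
      simp only [ContinuousLinearMap.prod_apply, ContinuousLinearMap.coe_fst',
        ContinuousLinearMap.smul_apply, ContinuousLinearMap.sub_apply,
        ContinuousLinearMap.coe_snd', ContinuousLinearMap.smulRight_apply, hDG]
      simp only [smul_eq_mul]
      field_simp
      abel)
    (by
      rintro ⟨u, v⟩
      refine Prod.ext rfl ?_
      simp only [ContinuousLinearMap.prod_apply, ContinuousLinearMap.coe_fst',
        ContinuousLinearMap.smul_apply, ContinuousLinearMap.sub_apply,
        ContinuousLinearMap.coe_snd', ContinuousLinearMap.smulRight_apply, hDG]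
      simp only [smul_eq_mul]
      field_simp
      abel)

lemma auxEquiv_coe (DG : ℝ × ℂ →L[ℝ] ℂ) (g a : ℂ) (ha : a ≠ 0)
    (hDG : ∀ (u : ℝ) (v : ℂ), DG (u, v) = u • g + v * a) :
    (auxEquiv DG g a ha hDG : ℝ × ℂ →L[ℝ] ℝ × ℂ) = (ContinuousLinearMap.fst ℝ ℝ ℂ).prod DG :=
  rfl

lemma auxEquiv_symm_apply (DG : ℝ × ℂ →L[ℝ] ℂ) (g a : ℂ) (ha : a ≠ 0)
    (hDG : ∀ (u : ℝ) (v : ℂ), DG (u, v) = u • g + v * a) :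
    (auxEquiv DG g a ha hDG).symm ((1:ℝ), (0:ℂ)) = ((1:ℝ), -(a⁻¹ * g)) := by
  apply (auxEquiv DG g a ha hDG).symm_apply_eq.2
  show ((1:ℝ), (0:ℂ)) = ((ContinuousLinearMap.fst ℝ ℝ ℂ).prod DG) ((1:ℝ), -(a⁻¹ * g))
  refine Prod.ext rfl ?_
  simp only [ContinuousLinearMap.prod_apply, ContinuousLinearMap.coe_fst', hDG]
  simp only [one_smul]
  field_simp
  ring


/-- Analytic core of Lemma 1.8: existence, derivative formula, and local uniqueness of the
root branch `λ*(ρ)` of `F (ρ, λ) = 0` bifurcating from a simple imaginary root `iτ₀` of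
`∂ρF (0, ·)`. -/
theorem stmt_1 (F : ℝ × ℂ → ℂ)
    (hF : ContDiff ℝ 3 F)
    (hol : ∀ (ρ : ℝ) (lam : ℂ), DifferentiableAt ℂ (fun z => F (ρ, z)) lam)
    (hF0 : ∀ lam : ℂ, F (0, lam) = 0)
    (τ₀ : ℝ) (hτ₀ : τ₀ ≠ 0) :
    let dρF : ℝ × ℂ → ℂ := fun p => fderiv ℝ F p (1, 0)
    -- ∂ρF(0, iτ₀) = 0 and ∂λ∂ρF(0, iτ₀) ≠ 0 imply:
    dρF (0, I * τ₀) = 0 →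
    fderiv ℝ dρF (0, I * τ₀) ((0 : ℝ), (1 : ℂ)) ≠ 0 →
    ∃ ρ₀ > (0:ℝ), ∃ lamstar : ℝ → ℂ,
      ContDiffOn ℝ 1 lamstar (Set.Ioo (-ρ₀) ρ₀) ∧
      lamstar 0 = I * τ₀ ∧
      (∀ ρ : ℝ, |ρ| < ρ₀ → F (ρ, lamstar ρ) = 0) ∧
      deriv lamstar 0 =
        -(1/2) * fderiv ℝ dρF (0, I * τ₀) ((1 : ℝ), (0 : ℂ)) /
          fderiv ℝ dρF (0, I * τ₀) ((0 : ℝ), (1 : ℂ)) ∧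
      ∃ δ > (0:ℝ), ∀ (ρ : ℝ) (μ : ℂ), 0 < |ρ| → |ρ| < δ → ‖μ - I * τ₀‖ < δ →
        F (ρ, μ) = 0 → μ = lamstar ρ := by
  intro dρF hz ha
  have hdF : Differentiable ℝ F := hF.differentiable (by norm_num)
  have hh : ContDiff ℝ 2 dρF := (hF.fderiv_right (by norm_num)).clm_apply contDiff_const
  set p₀ : ℝ × ℂ := ((0:ℝ), I * (τ₀:ℂ)) with hp₀
  set G : ℝ × ℂ → ℂ := fun x => ∫ t in (0:ℝ)..1, dρF (t * x.1, x.2) with hGdef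
  have hGC : ContDiff ℝ 1 G := aux_G_contDiff dρF hh
  have hFeq : ∀ p : ℝ × ℂ, F p = p.1 • G p := fun p => aux_ftc F hF hF0 p
  set A : ℝ × ℂ →L[ℝ] ℂ := fderiv ℝ dρF p₀ with hAdef
  have hA0v : ∀ v : ℂ, A ((0:ℝ), v) = v * A ((0:ℝ), (1:ℂ)) := fun v => aux_sym F hF hol p₀ v
  set DG : ℝ × ℂ →L[ℝ] ℂ := fderiv ℝ G p₀ with hDGdef
  set g : ℂ := (1/2 : ℝ) • A ((1:ℝ), (0:ℂ)) with hgdef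
  set a : ℂ := A ((0:ℝ), (1:ℂ)) with hadef
  have ha' : a ≠ 0 := ha
  have hDGval : ∀ (u : ℝ) (v : ℂ), DG (u, v) = u • g + v * a := by
    intro u v
    have h1 : DG (u, v) = (1/2:ℝ) • (u • A ((1:ℝ),(0:ℂ))) + A ((0:ℝ), v) :=
      aux_fderiv_val dρF hh (I * (τ₀:ℂ)) u v
    rw [h1, hA0v v, hgdef, hadef, smul_comm]
  set e := auxEquiv DG g a ha' hDGval with hedef
  set Φ : ℝ × ℂ → ℝ × ℂ := fun p => (p.1, G p) with hΦdef
  have hΦC : ContDiff ℝ 1 Φ := contDiff_fst.prodMk hGC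
  have hT : HasFDerivAt Φ (e : ℝ × ℂ →L[ℝ] ℝ × ℂ) p₀ := by
    have h2 : HasFDerivAt Φ ((ContinuousLinearMap.fst ℝ ℝ ℂ).prod DG) p₀ :=
      (hasFDerivAt_fst).prodMk ((hGC.differentiable one_ne_zero p₀).hasFDerivAt)
    rw [hedef, auxEquiv_coe]
    exact h2
  have hs : HasStrictFDerivAt Φ (e : ℝ × ℂ →L[ℝ] ℝ × ℂ) p₀ :=
    hΦC.contDiffAt.hasStrictFDerivAt' hT one_ne_zero
  have hΦp₀ : Φ p₀ = ((0:ℝ), (0:ℂ)) := by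
    refine Prod.ext rfl ?_
    show G p₀ = 0
    have h3 : G p₀ = ∫ t in (0:ℝ)..1, dρF p₀ := by
      rw [hGdef]
      apply intervalIntegral.integral_congr
      intro t _
      simp [hp₀]
    rw [h3, intervalIntegral.integral_const]
    simp [hz]
  set Ψ : ℝ × ℂ → ℝ × ℂ := hs.localInverse Φ e p₀ with hΨdef
  have hlinv := hs.eventually_left_inverse
  have hrinv := hs.eventually_right_inverse
  rw [hΦp₀] at hrinv
  have hΨC : ContDiffAt ℝ 1 Ψ ((0:ℝ), (0:ℂ)) := by
    rw [← hΦp₀]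
    exact hΦC.contDiffAt.to_localInverse hT one_ne_zero
  have hΨ00 : Ψ ((0:ℝ), (0:ℂ)) = p₀ := by
    rw [← hΦp₀]; exact hs.localInverse_apply_image
  set lamstar : ℝ → ℂ := fun ρ => (Ψ (ρ, 0)).2 with hlamdef
  obtain ⟨u, hu, hΨon⟩ := hΨC.contDiffOn le_rfl (by simp)
  obtain ⟨ε₁, hε₁, hball₁⟩ := Metric.mem_nhds_iff.1 hu
  obtain ⟨ε₂, hε₂, hr⟩ := Metric.eventually_nhds_iff.1 hrinv
  obtain ⟨ε₃, hε₃, hl⟩ := Metric.eventually_nhds_iff.1 hlinv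
  have hdistι : ∀ ρ : ℝ, dist ((ρ, (0:ℂ)) : ℝ × ℂ) ((0:ℝ), (0:ℂ)) = |ρ| := by
    intro ρ
    rw [Prod.dist_eq]
    simp [Real.dist_eq]
  refine ⟨min ε₁ ε₂, lt_min hε₁ hε₂, lamstar, ?_, ?_, ?_, ?_, ε₃, hε₃, ?_⟩
  · -- ContDiffOn
    have hι : ContDiff ℝ 1 (fun ρ : ℝ => ((ρ, (0:ℂ)) : ℝ × ℂ)) := contDiff_id.prodMk contDiff_const
    have hmaps : Set.MapsTo (fun ρ : ℝ => ((ρ, (0:ℂ)) : ℝ × ℂ))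
        (Set.Ioo (-(min ε₁ ε₂)) (min ε₁ ε₂)) u := by
      intro ρ hρ
      apply hball₁
      rw [Metric.mem_ball, hdistι]
      rw [Set.mem_Ioo] at hρ
      have : |ρ| < min ε₁ ε₂ := abs_lt.2 ⟨hρ.1, hρ.2⟩
      exact lt_of_lt_of_le this (min_le_left _ _)
    exact contDiff_snd.comp_contDiffOn (hΨon.comp hι.contDiffOn hmaps)
  · -- value at 0
    show (Ψ ((0:ℝ), (0:ℂ))).2 = I * (τ₀:ℂ)
    rw [hΨ00]
  · -- F vanishes along the branch
    intro ρ hρ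
    have hb : dist ((ρ, (0:ℂ)) : ℝ × ℂ) ((0:ℝ), (0:ℂ)) < ε₂ := by
      rw [hdistι]; exact lt_of_lt_of_le hρ (min_le_right _ _)
    have hq := hr hb
    have hq1 : (Ψ (ρ, (0:ℂ))).1 = ρ := congrArg Prod.fst hq
    have hq2 : G (Ψ (ρ, (0:ℂ))) = 0 := congrArg Prod.snd hq
    have hpt : ((ρ : ℝ), lamstar ρ) = Ψ (ρ, (0:ℂ)) := Prod.ext hq1.symm rfl
    rw [hFeq (ρ, lamstar ρ), hpt, hq2, smul_zero]
  · -- derivative at 0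
    have hΨs : HasStrictFDerivAt Ψ ((e.symm : ℝ × ℂ →L[ℝ] ℝ × ℂ)) ((0:ℝ), (0:ℂ)) := by
      rw [← hΦp₀]; exact hs.to_localInverse
    have hι' : HasFDerivAt (fun ρ : ℝ => ((ρ, (0:ℂ)) : ℝ × ℂ))
        ((ContinuousLinearMap.id ℝ ℝ).prod (0 : ℝ →L[ℝ] ℂ)) 0 :=
      (hasFDerivAt_id (0:ℝ)).prodMk (hasFDerivAt_const (0:ℂ) (0:ℝ))
    have hcomp := (hΨs.hasFDerivAt.comp (0:ℝ) hι').snd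
    have hd : HasDerivAt lamstar
        (((ContinuousLinearMap.snd ℝ ℝ ℂ).comp
          (((e.symm : ℝ × ℂ →L[ℝ] ℝ × ℂ)).comp ((ContinuousLinearMap.id ℝ ℝ).prod 0))) 1) 0 :=
      hcomp.hasDerivAt
    rw [hd.deriv]
    show ((e.symm : ℝ × ℂ →L[ℝ] ℝ × ℂ)
        (((ContinuousLinearMap.id ℝ ℝ).prod (0 : ℝ →L[ℝ] ℂ)) 1)).2
      = -(1/2) * A ((1:ℝ), (0:ℂ)) / a
    have : (((ContinuousLinearMap.id ℝ ℝ).prod (0 : ℝ →L[ℝ] ℂ)) 1) = ((1:ℝ), (0:ℂ)) := rfl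
    rw [this]
    have hsymm : (e.symm : ℝ × ℂ →L[ℝ] ℝ × ℂ) ((1:ℝ), (0:ℂ)) = ((1:ℝ), -(a⁻¹ * g)) := by
      rw [hedef]
      exact auxEquiv_symm_apply DG g a ha' hDGval
    rw [hsymm]
    show -(a⁻¹ * g) = -(1/2) * A ((1:ℝ), (0:ℂ)) / a
    rw [hgdef]
    rw [Complex.real_smul]
    push_cast
    ring
  · -- uniqueness
    intro ρ μ hρpos hρδ hμδ hFval
    have hρne : ρ ≠ 0 := fun hc => by simp [hc] at hρpos
    have hGz : G (ρ, μ) = 0 := by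
      have h4 := hFeq (ρ, μ)
      rw [hFval] at h4
      exact (smul_eq_zero.1 h4.symm).resolve_left hρne
    have hdist : dist ((ρ, μ) : ℝ × ℂ) p₀ < ε₃ := by
      rw [hp₀, Prod.dist_eq]
      apply max_lt
      · simpa [Real.dist_eq] using hρδ
      · simpa [Complex.dist_eq] using hμδ
    have h5 := hl hdist
    have hΦval : Φ (ρ, μ) = ((ρ : ℝ), (0:ℂ)) := Prod.ext rfl hGz
    rw [hΦval] at h5
    exact (congrArg Prod.snd h5).symm
end

section
/- Let τ* : ℝ → ℝ, β, δ : ℝ → ℂ be continuously differentiable, let r : ℝ × ℝ → ℂ be continuously differentiable, and for ε, ξ ∈ ℝ set λ(ε, ξ) := i ξ τ*(ε) − ξ² β(ε) + δ(ε) ξ³ + r(ε, ξ) ξ⁴. Assume Re β(0) = 0 and (d/dε)(Re β)(0) < 0. Then there exist ξ₀ > 0 and a unique continuously differentiable function E : (−ξ₀, ξ₀) → ℝ with E(0) = 0 such that Re λ(E(ξ), ξ) = 0 for all |ξ| < ξ₀. Moreover there is δ₀ > 0 such that whenever 0 < |ξ| < δ₀, |ε| < δ₀ and Re λ(ε, ξ)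 = 0, one has ε = E(ξ). -/
/-- Corollary 1.9 (existence and uniqueness part): under (B2), i.e. `Re β(0) = 0` and
`∂ε Re β(0) < 0`, the equation `Re λ(ε, ξ) = 0` with
`λ(ε, ξ) = iξτ*(ε) − ξ²β(ε) + δ(ε)ξ³ + r(ε, ξ)ξ⁴` is solved near the origin by a unique
`C¹` function `ε = E(ξ)` with `E(0) = 0`, and this solution is pointwise unique for
`0 < |ξ|, |ε|` small. -/
theorem stmt_2 (τs : ℝ → ℝ) (β δ : ℝ → ℂ) (r : ℝ × ℝ → ℂ)
    (hτ : ContDiff ℝ 1 τs) (hβ : ContDiff ℝ 1 β) (hδ : ContDiff ℝ 1 δ)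
    (hr : ContDiff ℝ 1 r)
    (lam : ℝ → ℝ → ℂ)
    (hlam : lam = fun (ε ξ : ℝ) =>
      Complex.I * (ξ : ℂ) * (τs ε : ℂ) - (ξ : ℂ)^2 * β ε + δ ε * (ξ : ℂ)^3
        + r (ε, ξ) * (ξ : ℂ)^4)
    (hβ0 : (β 0).re = 0)
    (hβ' : deriv (fun ε => (β ε).re) 0 < 0) :
    ∃ ξ₀ > (0:ℝ), ∃ E : ℝ → ℝ,
      (ContDiffOn ℝ 1 E (Set.Ioo (-ξ₀) ξ₀) ∧ E 0 = 0 ∧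
        ∀ ξ : ℝ, |ξ| < ξ₀ → (lam (E ξ) ξ).re = 0) ∧
      (∀ E' : ℝ → ℝ,
        ContDiffOn ℝ 1 E' (Set.Ioo (-ξ₀) ξ₀) → E' 0 = 0 →
        (∀ ξ : ℝ, |ξ| < ξ₀ → (lam (E' ξ) ξ).re = 0) →
        ∀ ξ : ℝ, |ξ| < ξ₀ → E' ξ = E ξ) ∧
      ∃ δ₀ > (0:ℝ), ∀ ξ ε : ℝ, 0 < |ξ| → |ξ| < δ₀ → |ε| < δ₀ →
        (lam ε ξ).re = 0 → ε = E ξ := by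
  classical
  -- the reduced function F with Re λ = ξ² F(ε, ξ)
  set F : ℝ × ℝ → ℝ :=
    fun p => -(β p.1).re + (δ p.1).re * p.2 + (r p).re * p.2^2 with hFdef
  have hF : ContDiff ℝ 1 F := by
    have h1 : ContDiff ℝ 1 (fun p : ℝ × ℝ => (β p.1).re) :=
      Complex.reCLM.contDiff.comp (hβ.comp contDiff_fst)
    have h2 : ContDiff ℝ 1 (fun p : ℝ × ℝ => (δ p.1).re) :=
      Complex.reCLM.contDiff.comp (hδ.comp contDiff_fst)
    have h3 : ContDiff ℝ 1 (fun p : ℝ × ℝ => (r p).re) :=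
      Complex.reCLM.contDiff.comp hr
    exact (h1.neg.add (h2.mul contDiff_snd)).add (h3.mul (contDiff_snd.pow 2))
  have key : ∀ ε ξ : ℝ, (lam ε ξ).re = ξ^2 * F (ε, ξ) := by
    intro ε ξ
    rw [hlam]
    simp only [hFdef]
    simp [Complex.add_re, Complex.sub_re, Complex.mul_re, Complex.mul_im,
      ← Complex.ofReal_pow, Complex.ofReal_re, Complex.ofReal_im]
    ring
  -- derivative of F at the origin
  set L := fderiv ℝ F (0,0) with hLdef
  have hFd : HasFDerivAt F L (0,0) := (hF.differentiable one_ne_zero (0,0)).hasFDerivAt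
  have hLa : L (1,0) = -deriv (fun ε => (β ε).re) 0 := by
    have hι : HasDerivAt (fun t : ℝ => ((t, 0) : ℝ × ℝ)) (1, 0) 0 :=
      (hasDerivAt_id 0).prodMk (hasDerivAt_const 0 0)
    have hFd' : HasFDerivAt F L ((fun t : ℝ => ((t, 0) : ℝ × ℝ)) 0) := by simpa using hFd
    have hcomp : HasDerivAt (fun t : ℝ => F (t, 0)) (L (1,0)) 0 :=
      HasFDerivAt.comp_hasDerivAt (f := fun t : ℝ => ((t, 0) : ℝ × ℝ)) 0 hFd' hι
    have hg : HasDerivAt (fun ε => (β ε).re) (deriv (fun ε => (β ε).re) 0) 0 := by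
      have : DifferentiableAt ℝ (fun ε => (β ε).re) 0 :=
        (Complex.reCLM.differentiable.comp (hβ.differentiable one_ne_zero)).differentiableAt
      exact this.hasDerivAt
    have heq : (fun t : ℝ => F (t, 0)) = fun t => -(β t).re := by
      funext t; simp [hFdef]
    rw [heq] at hcomp
    exact hcomp.unique hg.neg
  have haL : L (1,0) ≠ 0 := by rw [hLa]; exact ne_of_gt (neg_pos.mpr hβ')
  have Llin : ∀ x : ℝ × ℝ, L x = x.1 * L (1,0) + x.2 * L (0,1) := by
    intro x
    have hx : x = x.1 • ((1:ℝ),(0:ℝ)) + x.2 • ((0:ℝ),(1:ℝ)) := by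
      simp [Prod.ext_iff]
    conv_lhs => rw [hx]
    rw [map_add, map_smul, map_smul, smul_eq_mul, smul_eq_mul]
  -- build the invertible derivative of Φ := (F, snd)
  obtain ⟨e, he⟩ : ∃ e : (ℝ × ℝ) ≃L[ℝ] (ℝ × ℝ),
      (e : (ℝ × ℝ) →L[ℝ] (ℝ × ℝ)) = L.prod (ContinuousLinearMap.snd ℝ ℝ ℝ) := by
    set a := L (1,0)
    set b := L (0,1)
    set f₀ : (ℝ × ℝ) →L[ℝ] (ℝ × ℝ) := L.prod (ContinuousLinearMap.snd ℝ ℝ ℝ) with hf₀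
    set G : (ℝ × ℝ) →L[ℝ] (ℝ × ℝ) :=
      (a⁻¹ • (ContinuousLinearMap.fst ℝ ℝ ℝ - b • ContinuousLinearMap.snd ℝ ℝ ℝ)).prod
        (ContinuousLinearMap.snd ℝ ℝ ℝ) with hG
    have h₁ : Function.LeftInverse G f₀ := by
      intro x
      have hx : f₀ x = (L x, x.2) := rfl
      rw [hx]
      simp only [hG, ContinuousLinearMap.prod_apply, ContinuousLinearMap.smul_apply,
        ContinuousLinearMap.sub_apply, ContinuousLinearMap.coe_fst',
        ContinuousLinearMap.coe_snd', smul_eq_mul]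
      rw [Llin x]
      ext
      · simp; field_simp; ring
      · simp
    have h₂ : Function.RightInverse G f₀ := by
      intro y
      have hGy : G y = (a⁻¹ * (y.1 - b * y.2), y.2) := rfl
      rw [hGy]
      have hx : f₀ (a⁻¹ * (y.1 - b * y.2), y.2) = (L (a⁻¹ * (y.1 - b * y.2), y.2), y.2) := rfl
      rw [hx, Llin]
      ext
      · simp; field_simp; ring
      · simp
    exact ⟨ContinuousLinearEquiv.equivOfInverse f₀ G h₁ h₂, rfl⟩
  set Φ : ℝ × ℝ → ℝ × ℝ := fun p => (F p, p.2) with hΦdef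
  have hΦcd : ContDiff ℝ 1 Φ := hF.prodMk contDiff_snd
  have hΦc : ContDiffAt ℝ 1 Φ (0,0) := hΦcd.contDiffAt
  have hΦd : HasFDerivAt Φ (e : (ℝ × ℝ) →L[ℝ] (ℝ × ℝ)) (0,0) := by
    rw [he]
    exact hFd.prodMk (ContinuousLinearMap.snd ℝ ℝ ℝ).hasFDerivAt
  have hΦ00 : Φ (0,0) = (0,0) := by
    simp [hΦdef, hFdef, hβ0]
  -- the local inverse and the function E
  set inv := hΦc.localInverse hΦd one_ne_zero with hinvdef
  set E : ℝ → ℝ := fun ξ => (inv (0, ξ)).1 with hEdef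
  have hinv00 : inv (0,0) = (0,0) := by
    have := hΦc.localInverse_apply_image hΦd one_ne_zero
    rwa [hΦ00] at this
  have hE0 : E 0 = 0 := by rw [hEdef]; simp only [hinv00]
  have hs : HasStrictFDerivAt Φ (e : (ℝ × ℝ) →L[ℝ] (ℝ × ℝ)) (0,0) :=
    hΦc.hasStrictFDerivAt' hΦd one_ne_zero
  have h₁ev : ∀ᶠ y in nhds ((0,0) : ℝ × ℝ), Φ (inv y) = y := by
    have := hs.eventually_right_inverse
    rwa [hΦ00] at this
  have h₂ev : ∀ᶠ p in nhds ((0,0) : ℝ × ℝ), inv (Φ p) = p := hs.eventually_left_inverse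
  obtain ⟨ρ₁, hρ₁, hball₁⟩ := Metric.eventually_nhds_iff.mp h₁ev
  obtain ⟨ρ₂, hρ₂, hball₂⟩ := Metric.eventually_nhds_iff.mp h₂ev
  -- smoothness of E near 0
  have hEc : ContDiffAt ℝ 1 E 0 := by
    have hic : ContDiffAt ℝ 1 inv ((0:ℝ), (0:ℝ)) := by
      have := hΦc.to_localInverse hΦd one_ne_zero
      rwa [hΦ00] at this
    have hline : ContDiffAt ℝ 1 (fun ξ : ℝ => (((0:ℝ), ξ) : ℝ × ℝ)) 0 :=
      (contDiff_const.prodMk contDiff_id).contDiffAt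
    have hcomp : ContDiffAt ℝ 1 (fun ξ : ℝ => inv (0, ξ)) 0 :=
      ContDiffAt.comp 0 hic hline
    exact ContDiffAt.comp 0 contDiff_fst.contDiffAt hcomp
  obtain ⟨u, hu, hEu⟩ := hEc.contDiffOn le_rfl (by simp)
  obtain ⟨ρ₃, hρ₃, hball₃⟩ := Metric.mem_nhds_iff.mp hu
  -- continuity bound: |E ξ| < ρ₂ for small ξ
  have hEsmall : ∀ᶠ ξ in nhds (0:ℝ), |E ξ| < ρ₂ := by
    have hco : ContinuousAt E 0 := hEc.continuousAt
    have := hco (Metric.ball_mem_nhds (E 0) hρ₂)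
    rw [hE0] at this
    filter_upwards [this] with ξ hξ
    simpa [Real.dist_eq] using hξ
  obtain ⟨ρ₄, hρ₄, hball₄⟩ := Metric.eventually_nhds_iff.mp hEsmall
  -- choose the radii
  set ξ₀ := min ρ₁ (min ρ₃ (min ρ₄ ρ₂)) with hξ₀def
  have hξ₀pos : 0 < ξ₀ := by positivity
  have hξ₀₁ : ξ₀ ≤ ρ₁ := min_le_left _ _
  have hξ₀₃ : ξ₀ ≤ ρ₃ := le_trans (min_le_right _ _) (min_le_left _ _)
  have hξ₀₄ : ξ₀ ≤ ρ₄ := le_trans (min_le_right _ _) (le_trans (min_le_right _ _) (min_le_left _ _))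
  have hξ₀₂ : ξ₀ ≤ ρ₂ := le_trans (min_le_right _ _) (le_trans (min_le_right _ _) (min_le_right _ _))
  -- existence: Re λ (E ξ) ξ = 0
  have hEsolves : ∀ ξ : ℝ, |ξ| < ξ₀ → F (E ξ, ξ) = 0 := by
    intro ξ hξ
    have hdist : dist (((0:ℝ), ξ) : ℝ × ℝ) ((0,0) : ℝ × ℝ) < ρ₁ := by
      rw [Prod.dist_eq]
      simp only [dist_self, Real.dist_eq, sub_zero]
      rw [max_eq_right (abs_nonneg ξ)]
      exact lt_of_lt_of_le hξ hξ₀₁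
    have hΦinv : Φ (inv (0, ξ)) = (0, ξ) := hball₁ hdist
    have h2 : (inv (0, ξ)).2 = ξ := congrArg Prod.snd hΦinv
    have h1 : F (inv (0, ξ)) = 0 := congrArg Prod.fst hΦinv
    have hpt : ((E ξ, ξ) : ℝ × ℝ) = inv (0, ξ) := Prod.ext rfl h2.symm
    rw [hpt]; exact h1
  -- pointwise uniqueness
  have hptuniq : ∀ ξ ε : ℝ, 0 < |ξ| → |ξ| < ρ₂ → |ε| < ρ₂ → (lam ε ξ).re = 0 → ε = E ξ := by
    intro ξ ε hξne hξ hε hlam0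
    have hF0 : F (ε, ξ) = 0 := by
      have h : ξ^2 * F (ε, ξ) = 0 := by rw [← key, hlam0]
      rcases mul_eq_zero.mp h with h' | h'
      · exact absurd h' (pow_ne_zero 2 (by simpa [abs_pos] using hξne))
      · exact h'
    have hΦval : Φ (ε, ξ) = ((0:ℝ), ξ) := Prod.ext hF0 rfl
    have hdist : dist ((ε, ξ) : ℝ × ℝ) ((0,0) : ℝ × ℝ) < ρ₂ := by
      rw [Prod.dist_eq]
      simp only [Real.dist_eq, sub_zero]
      exact max_lt hε hξ
    have := hball₂ hdist
    rw [hΦval] at this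
    exact (congrArg Prod.fst this).symm
  -- bound |E ξ| < ρ₂ on the interval
  have hEbound : ∀ ξ : ℝ, |ξ| < ξ₀ → |E ξ| < ρ₂ := by
    intro ξ hξ
    exact hball₄ (by simpa [Real.dist_eq] using lt_of_lt_of_le hξ hξ₀₄)
  refine ⟨ξ₀, hξ₀pos, E, ⟨?_, hE0, ?_⟩, ?_, ρ₂, hρ₂, ?_⟩
  · -- ContDiffOn
    refine hEu.mono ?_
    intro x hx
    apply hball₃
    have : |x| < ξ₀ := by
      rw [abs_lt]; exact ⟨(Set.mem_Ioo.mp hx).1, (Set.mem_Ioo.mp hx).2⟩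
    simpa [Real.dist_eq] using lt_of_lt_of_le this hξ₀₃
  · -- solves
    intro ξ hξ
    rw [key, hEsolves ξ hξ, mul_zero]
  · -- functional uniqueness
    intro E' hE'cd hE'0 hE'solve ξ hξ
    set sI : Set ℝ := Set.Ioo (-ξ₀) ξ₀ with hsIdef
    have hmem : ξ ∈ sI := by rw [hsIdef, Set.mem_Ioo]; constructor <;> [linarith [abs_lt.mp hξ]; linarith [abs_lt.mp hξ]]
    haveI : PreconnectedSpace sI := Subtype.preconnectedSpace isPreconnected_Ioo
    have hEc' : Continuous (sI.restrict E) := by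
      refine ContinuousOn.restrict ?_
      refine (hEu.mono ?_).continuousOn
      intro x hx
      apply hball₃
      have : |x| < ξ₀ := abs_lt.mpr ⟨(Set.mem_Ioo.mp hx).1, (Set.mem_Ioo.mp hx).2⟩
      simpa [Real.dist_eq] using lt_of_lt_of_le this hξ₀₃
    have hE'c : Continuous (sI.restrict E') := ContinuousOn.restrict hE'cd.continuousOn
    set T : Set sI := {y | E' ↑y = E ↑y} with hTdef
    have habs : ∀ y : sI, |(y : ℝ)| < ξ₀ := by
      intro y
      exact abs_lt.mpr ⟨y.2.1, y.2.2⟩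
    have hTeq : T = {y : sI | |E' ↑y| < ρ₂} := by
      ext y
      simp only [hTdef, Set.mem_setOf_eq]
      constructor
      · intro h
        rw [h]
        exact hEbound _ (habs y)
      · intro h
        by_cases hy0 : (y : ℝ) = 0
        · rw [hy0, hE'0, hE0]
        · have hξy : 0 < |(y : ℝ)| := abs_pos.mpr hy0
          exact hptuniq _ _ hξy (lt_of_lt_of_le (habs y) hξ₀₂) h (hE'solve _ (habs y))
    have hTopen : IsOpen T := by
      rw [hTeq]
      exact isOpen_lt (continuous_abs.comp hE'c) continuous_const
    have hTclosed : IsClosed T := isClosed_eq hE'c hEc'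
    have hT0 : (⟨0, by rw [hsIdef, Set.mem_Ioo]; constructor <;> linarith⟩ : sI) ∈ T := by
      simp only [hTdef, Set.mem_setOf_eq]
      rw [hE'0, hE0]
    have : T = Set.univ := IsClopen.eq_univ ⟨hTclosed, hTopen⟩ ⟨_, hT0⟩
    have : (⟨ξ, hmem⟩ : sI) ∈ T := by rw [this]; trivial
    exact this
  · -- pointwise uniqueness
    intro ξ ε h1 h2 h3 h4
    exact hptuniq ξ ε h1 h2 h3 h4
end

section
/- Let τ* : ℝ → ℝ, β, δ : ℝ → ℂ be continuously differentiable, let r : ℝ × ℝ → ℂ be continuously differentiable, and for ε, ξ ∈ ℝ set λ(ε, ξ) := i ξ τ*(ε) − ξ² β(ε) + δ(ε) ξ³ + r(ε, ξ) ξ⁴. Assume Re β(0) = 0, (d/dε)(Re β)(0) < 0, and in addition Re δ(0) ≠ 0. Let E be the continuously differentiable function with E(0) = 0 and Re λ(E(ξ), ξ) = 0 for ξ near 0. Then E(ξ)/ξ → Re δ(0) / (d/dε)(Re β)(0) as ξ → 0; in particular E(ξ) ≠ 0 for all sufficiently small ξ ≠ 0. -/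
open Filter Topology

/-- Asymptotic statement (1.24) of Corollary 1.9: in the generic case `Re δ(0) ≠ 0`,
the neutral-stability curve `E(ξ)` determined by `Re λ(E(ξ), ξ) = 0` satisfies
`E(ξ)/ξ → Re δ(0) / ∂ε Re β(0)` as `ξ → 0`; in particular `E(ξ) ≠ 0` for small `ξ ≠ 0`. -/
theorem stmt_3 (τs : ℝ → ℝ) (β δ : ℝ → ℂ) (r : ℝ × ℝ → ℂ)
    (hτ : ContDiff ℝ 1 τs) (hβ : ContDiff ℝ 1 β) (hδ : ContDiff ℝ 1 δ)
    (hr : ContDiff ℝ 1 r)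
    (lam : ℝ → ℝ → ℂ)
    (hlam : lam = fun (ε ξ : ℝ) =>
      Complex.I * (ξ : ℂ) * (τs ε : ℂ) - (ξ : ℂ)^2 * β ε + δ ε * (ξ : ℂ)^3
        + r (ε, ξ) * (ξ : ℂ)^4)
    (hβ0 : (β 0).re = 0)
    (hβ' : deriv (fun ε => (β ε).re) 0 < 0)
    (hδ0 : (δ 0).re ≠ 0)
    (ξ₀ : ℝ) (hξ₀ : 0 < ξ₀) (E : ℝ → ℝ)
    (hE : ContDiffOn ℝ 1 E (Set.Ioo (-ξ₀) ξ₀)) (hE0 : E 0 = 0)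
    (hEroot : ∀ ξ : ℝ, |ξ| < ξ₀ → (lam (E ξ) ξ).re = 0) :
    Filter.Tendsto (fun ξ : ℝ => E ξ / ξ) (nhdsWithin 0 {(0:ℝ)}ᶜ)
      (nhds ((δ 0).re / deriv (fun ε => (β ε).re) 0)) ∧
    ∃ ξ₁ > (0:ℝ), ∀ ξ : ℝ, ξ ≠ 0 → |ξ| < ξ₁ → E ξ ≠ 0 := by
  set g : ℝ → ℝ := fun ε => (β ε).re with hgdef
  set g' : ℝ := deriv g 0 with hg'def
  have hg'ne : g' ≠ 0 := ne_of_lt hβ'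
  have hg0 : g 0 = 0 := hβ0
  have hgdiff : DifferentiableAt ℝ g 0 :=
    (Complex.reCLM.differentiable.comp (hβ.differentiable one_ne_zero)).differentiableAt
  -- E continuous at 0
  have hmem : Set.Ioo (-ξ₀) ξ₀ ∈ 𝓝 (0:ℝ) := Ioo_mem_nhds (by linarith) hξ₀
  have hEcont : ContinuousAt E 0 := hE.continuousOn.continuousAt hmem
  have hEtend : Tendsto E (𝓝 0) (𝓝 0) := by
    simpa [hE0] using hEcont.tendsto
  -- auxiliary slope function
  set h : ℝ → ℝ := fun ε => if ε = 0 then g' else g ε / ε with hhdef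
  have hgh : ∀ ε, g ε = h ε * ε := by
    intro ε
    by_cases hε : ε = 0
    · simp [hhdef, hε, hg0]
    · simp only [hhdef, hε, if_false]; exact (div_mul_cancel₀ _ hε).symm
  have hhtend : Tendsto h (𝓝 0) (𝓝 g') := by
    rw [← nhdsNE_sup_pure (0:ℝ), Filter.tendsto_sup]
    constructor
    · have hslope : Tendsto (slope g 0) (𝓝[≠] (0:ℝ)) (𝓝 g') :=
        (hasDerivAt_iff_tendsto_slope).1 hgdiff.hasDerivAt
      refine hslope.congr' ?_
      filter_upwards [self_mem_nhdsWithin] with ξ hξ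
      have hξ' : (ξ:ℝ) ≠ 0 := hξ
      simp [slope_def_field, hhdef, hξ', hg0]
    · have h0 : h 0 = g' := by simp [hhdef]
      simpa [h0] using tendsto_pure_nhds h 0
  -- key algebraic identity
  set F : ℝ → ℝ := fun ξ => (δ (E ξ)).re + ξ * (r (E ξ, ξ)).re with hFdef
  have key : ∀ ξ : ℝ, ξ ≠ 0 → |ξ| < ξ₀ → g (E ξ) = ξ * F ξ := by
    intro ξ hne hlt
    have h0 := hEroot ξ hlt
    rw [hlam] at h0
    simp only [Complex.add_re, Complex.sub_re, Complex.mul_re, Complex.mul_im,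
      Complex.I_re, Complex.I_im, ← Complex.ofReal_pow, Complex.ofReal_re,
      Complex.ofReal_im] at h0
    have hξ2 : ξ^2 ≠ 0 := pow_ne_zero 2 hne
    have : ξ^2 * g (E ξ) = ξ^2 * (ξ * F ξ) := by
      simp only [hgdef, hFdef]; ring_nf; ring_nf at h0; linarith
    exact mul_left_cancel₀ hξ2 this
  -- limit of F
  have hFtend : Tendsto F (𝓝 0) (𝓝 ((δ 0).re)) := by
    have hc : ContinuousAt F 0 := by
      apply ContinuousAt.add
      · exact (Complex.continuous_re.continuousAt).comp
          ((hδ.continuous.continuousAt).comp hEcont)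
      · exact (continuousAt_id).mul
          ((Complex.continuous_re.continuousAt).comp
            ((hr.continuous.continuousAt).comp (hEcont.prodMk continuousAt_id)))
    have hF0 : F 0 = (δ 0).re := by simp [hFdef, hE0]
    simpa [hF0] using hc.tendsto
  have hhE : Tendsto (fun ξ => h (E ξ)) (𝓝 0) (𝓝 g') := hhtend.comp hEtend
  -- eventual facts
  have hev : ∀ᶠ ξ in 𝓝[≠] (0:ℝ), E ξ / ξ = F ξ / h (E ξ) := by
    have h1 : ∀ᶠ ξ in 𝓝 (0:ℝ), h (E ξ) ≠ 0 := hhE.eventually_ne hg'ne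
    have h2 : ∀ᶠ ξ in 𝓝 (0:ℝ), |ξ| < ξ₀ := by
      filter_upwards [Metric.ball_mem_nhds (0:ℝ) hξ₀] with ξ hξ
      simpa [Real.dist_eq] using hξ
    filter_upwards [nhdsWithin_le_nhds h1, nhdsWithin_le_nhds h2,
      self_mem_nhdsWithin] with ξ hh1 hh2 hne
    have hne' : (ξ:ℝ) ≠ 0 := hne
    have e1 : ξ * F ξ = h (E ξ) * E ξ := by rw [← key ξ hne' hh2]; exact hgh (E ξ)
    rw [div_eq_div_iff hne' hh1]
    linarith [e1]
  have hmain : Tendsto (fun ξ : ℝ => E ξ / ξ) (𝓝[≠] (0:ℝ)) (𝓝 ((δ 0).re / g')) := by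
    have hq : Tendsto (fun ξ : ℝ => F ξ / h (E ξ)) (𝓝[≠] (0:ℝ)) (𝓝 ((δ 0).re / g')) :=
      Tendsto.mono_left (hFtend.div hhE hg'ne) nhdsWithin_le_nhds
    exact hq.congr' (hev.mono fun ξ hξ => hξ.symm)
  refine ⟨hmain, ?_⟩
  have hLne : (δ 0).re / g' ≠ 0 := div_ne_zero hδ0 hg'ne
  have hev2 : ∀ᶠ ξ in 𝓝[≠] (0:ℝ), E ξ / ξ ≠ 0 := hmain.eventually_ne hLne
  rw [Filter.eventually_iff, Metric.mem_nhdsWithin_iff] at hev2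
  obtain ⟨ξ₁, hξ₁, hsub⟩ := hev2
  refine ⟨ξ₁, hξ₁, fun ξ hne hlt hE0' => ?_⟩
  have hmemb : ξ ∈ Metric.ball (0:ℝ) ξ₁ ∩ {(0:ℝ)}ᶜ := by
    constructor
    · simpa [Real.dist_eq] using hlt
    · exact hne
  have := hsub hmemb
  exact this (by simp [hE0'])
end

section
/- Fix a > 0. Define g(z) := π^{−1/2} e^{−z²}, errfn(z) := ∫_{−∞}^{z} g(w) dw, and for t > 0, y ∈ ℝ, e(y, t) := errfn((y + a t)/√(4(t+1))) − errfn((y − a t)/√(4(t+1))). Then for each p ∈ [1, ∞] there is a constant C > 0 such that for all t > 0, the L^p norm in y over ℝ of ∂_t e(·, t) satisfies ‖∂_t e(·, t)‖_{L^p(ℝ)} ≤ C t^{−(1/2)(1 − 1/p)}. -/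
open Real MeasureTheory Set
open scoped ENNReal NNReal

noncomputable def Gs (z : ℝ) : ℝ := Real.pi ^ (-(1:ℝ)/2) * Real.exp (-z^2)

lemma Gs_cont : Continuous Gs := by
  unfold Gs; fun_prop

lemma Gs_int : Integrable Gs := by
  have h : Integrable (fun w : ℝ => Real.exp (-1 * w^2)) := integrable_exp_neg_mul_sq one_pos
  have := h.const_mul (Real.pi ^ (-(1:ℝ)/2))
  show Integrable (fun z : ℝ => Real.pi ^ (-(1:ℝ)/2) * Real.exp (-z^2))
  simpa using this

lemma errfn_hasDerivAt (z : ℝ) :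
    HasDerivAt (fun z : ℝ => ∫ w in Set.Iic z, Gs w) (Gs z) z := by
  have hfun : (fun z : ℝ => ∫ w in Set.Iic z, Gs w)
      = fun z => (∫ w in Set.Iic 0, Gs w) + ∫ w in (0:ℝ)..z, Gs w := by
    funext u
    rw [← intervalIntegral.integral_Iic_sub_Iic Gs_int.integrableOn Gs_int.integrableOn]
    ring
  rw [hfun]
  exact (intervalIntegral.integral_hasDerivAt_right (Gs_int.intervalIntegrable)
    (Gs_cont.stronglyMeasurableAtFilter _ _) Gs_cont.continuousAt).const_add _

lemma inner_hasDerivAt (b y t : ℝ) (ht : 0 < t) :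
    HasDerivAt (fun τ : ℝ => (y + b*τ) / Real.sqrt (4*(τ+1)))
      (b * (Real.sqrt (4*(t+1)))⁻¹
        - 2*((y + b*t) * (Real.sqrt (4*(t+1)))⁻¹) * ((Real.sqrt (4*(t+1)))⁻¹)^2) t := by
  have hq : (0:ℝ) < 4*(t+1) := by linarith
  have hr : 0 < Real.sqrt (4*(t+1)) := Real.sqrt_pos.mpr hq
  have hr2 : (Real.sqrt (4*(t+1)))^2 = 4*(t+1) := Real.sq_sqrt hq.le
  have hnum : HasDerivAt (fun τ : ℝ => y + b*τ) b t := by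
    simpa using ((hasDerivAt_id t).const_mul b).const_add y
  have hq' : HasDerivAt (fun τ : ℝ => 4*(τ+1)) 4 t := by
    simpa using ((hasDerivAt_id t).add_const 1).const_mul 4
  have hden : HasDerivAt (fun τ : ℝ => Real.sqrt (4*(τ+1)))
      (1 / (2 * Real.sqrt (4*(t+1))) * 4) t :=
    (Real.hasDerivAt_sqrt hq.ne').comp t hq'
  have hdiv := hnum.div hden hr.ne'
  refine hdiv.congr_deriv ?_
  field_simp
  ring_nf

lemma branch_hasDerivAt (b y t : ℝ) (ht : 0 < t) :
    HasDerivAt (fun τ : ℝ => ∫ w in Set.Iic ((y + b*τ) / Real.sqrt (4*(τ+1))), Gs w)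
      (Gs ((y + b*t) * (Real.sqrt (4*(t+1)))⁻¹) *
        (b * (Real.sqrt (4*(t+1)))⁻¹
          - 2*((y + b*t) * (Real.sqrt (4*(t+1)))⁻¹) * ((Real.sqrt (4*(t+1)))⁻¹)^2)) t := by
  have h := (errfn_hasDerivAt ((y + b*t) * (Real.sqrt (4*(t+1)))⁻¹)).comp t
    (inner_hasDerivAt b y t ht)
  simpa [div_eq_mul_inv, Function.comp_def] using h

lemma branch_bound (a b u s : ℝ) (hb : |b| ≤ a) (hs : 0 < s) (hs2 : s ≤ 1/2) :
    |Gs (u*s) * (b*s - 2*(u*s)*s^2)|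
      ≤ (Real.pi ^ (-(1:ℝ)/2) * (a+1)) * s * Real.exp (-(s^2/2)*u^2) := by
  set z := u*s with hz
  have hπ : (0:ℝ) < Real.pi ^ (-(1:ℝ)/2) := Real.rpow_pos_of_pos Real.pi_pos _
  have hexp0 : (0:ℝ) < Real.exp (-z^2) := Real.exp_pos _
  have key : |z| * Real.exp (-z^2) ≤ Real.exp (-(z^2)/2) := by
    have h1 : |z| ≤ Real.exp (z^2/2) := by
      have h2 : |z| ≤ z^2/2 + 1 := by nlinarith [sq_nonneg (|z| - 1), sq_abs z]
      have h3 := Real.add_one_le_exp (z^2/2)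
      linarith
    calc |z| * Real.exp (-z^2) ≤ Real.exp (z^2/2) * Real.exp (-z^2) :=
          mul_le_mul_of_nonneg_right h1 (Real.exp_nonneg _)
      _ = Real.exp (-(z^2)/2) := by rw [← Real.exp_add]; ring_nf
  have hexp : Real.exp (-z^2) ≤ Real.exp (-(z^2)/2) := by
    apply Real.exp_le_exp.mpr; nlinarith [sq_nonneg z]
  have habs : |b*s - 2*z*s^2| ≤ a*s + 2 * |z| * s^2 := by
    calc |b*s - 2*z*s^2| ≤ |b*s| + |2*z*s^2| := abs_sub _ _
      _ = |b| * s + 2 * |z| * s^2 := by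
          rw [abs_mul, abs_mul, abs_mul, abs_of_nonneg hs.le, abs_of_nonneg (by positivity : (0:ℝ) ≤ s^2)]
          norm_num
      _ ≤ a*s + 2 * |z| * s^2 := by nlinarith [abs_nonneg z, sq_nonneg s]
  have hGnn : 0 ≤ Gs z := by unfold Gs; positivity
  calc |Gs z * (b*s - 2*z*s^2)| = Gs z * |b*s - 2*z*s^2| := by
        rw [abs_mul, abs_of_nonneg hGnn]
    _ ≤ Gs z * (a*s + 2 * |z| * s^2) := mul_le_mul_of_nonneg_left habs hGnn
    _ = Real.pi ^ (-(1:ℝ)/2) * (a*s*Real.exp (-z^2) + 2*s^2*(|z| * Real.exp (-z^2))) := by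
        unfold Gs; ring
    _ ≤ Real.pi ^ (-(1:ℝ)/2) * (a*s*Real.exp (-(z^2)/2) + 2*s^2*Real.exp (-(z^2)/2)) := by
        have ha : 0 ≤ a := le_trans (abs_nonneg b) hb
        apply mul_le_mul_of_nonneg_left _ hπ.le
        have h1 := mul_le_mul_of_nonneg_left hexp (mul_nonneg ha hs.le)
        have h2 := mul_le_mul_of_nonneg_left key (by positivity : (0:ℝ) ≤ 2*s^2)
        nlinarith
    _ ≤ (Real.pi ^ (-(1:ℝ)/2) * (a+1)) * s * Real.exp (-(z^2)/2) := by
        have ha : 0 ≤ a := le_trans (abs_nonneg b) hb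
        have h2s : 2*s^2 ≤ s := by nlinarith
        have hE : 0 ≤ Real.exp (-(z^2)/2) := Real.exp_nonneg _
        nlinarith [mul_le_mul_of_nonneg_left (mul_le_mul_of_nonneg_right h2s hE) hπ.le]
    _ = (Real.pi ^ (-(1:ℝ)/2) * (a+1)) * s * Real.exp (-(s^2/2)*u^2) := by
        rw [hz]; ring_nf

lemma gauss_shift_integral (s c : ℝ) (hs : 0 < s) :
    ∫ y : ℝ, Real.exp (-(s^2/2)*(y+c)^2) = Real.sqrt (2*Real.pi) / s := by
  have h1 : (∫ y : ℝ, Real.exp (-(s^2/2)*(y+c)^2)) = ∫ x : ℝ, Real.exp (-(s^2/2)*x^2) :=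
    integral_add_right_eq_self (fun x => Real.exp (-(s^2/2)*x^2)) c
  rw [h1, integral_gaussian]
  have h2 : Real.pi / (s^2/2) = (Real.sqrt (2*Real.pi) / s)^2 := by
    rw [div_pow, Real.sq_sqrt (by positivity)]
    field_simp
  rw [h2, Real.sqrt_sq (by positivity)]

lemma gauss_shift_integrable (s c : ℝ) (hs : 0 < s) :
    Integrable (fun y : ℝ => Real.exp (-(s^2/2)*(y+c)^2)) := by
  have h : Integrable (fun x : ℝ => Real.exp (-(s^2/2)*x^2)) :=
    integrable_exp_neg_mul_sq (by positivity)
  exact h.comp_add_right c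

lemma lp_bound (f : ℝ → ℝ) (K s c₁ c₂ : ℝ) (hK : 0 ≤ K) (hs : 0 < s) (p : ENNReal) (hp : 1 ≤ p)
    (hf : ∀ y, |f y| ≤ K*s*(Real.exp (-(s^2/2)*(y+c₁)^2) + Real.exp (-(s^2/2)*(y+c₂)^2))) :
    eLpNorm f p volume ≤ ENNReal.ofReal (2*K*s) ^ (1 - 1/p.toReal)
      * ENNReal.ofReal (2*K*Real.sqrt (2*Real.pi)) ^ (1/p.toReal) := by
  set B : ℝ → ℝ := fun y => K*s*(Real.exp (-(s^2/2)*(y+c₁)^2) + Real.exp (-(s^2/2)*(y+c₂)^2))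
    with hB
  have hBnn : ∀ y, 0 ≤ B y := fun y => by positivity
  have hBle : ∀ y, B y ≤ 2*K*s := by
    intro y
    have e1 : Real.exp (-(s^2/2)*(y+c₁)^2) ≤ 1 :=
      Real.exp_le_one_iff.mpr (by nlinarith [sq_nonneg (y+c₁), sq_nonneg s])
    have e2 : Real.exp (-(s^2/2)*(y+c₂)^2) ≤ 1 :=
      Real.exp_le_one_iff.mpr (by nlinarith [sq_nonneg (y+c₂), sq_nonneg s])
    have hBy : B y = K*s*(Real.exp (-(s^2/2)*(y+c₁)^2) + Real.exp (-(s^2/2)*(y+c₂)^2)) := rfl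
    rw [hBy]
    nlinarith [mul_nonneg hK hs.le, Real.exp_nonneg (-(s^2/2)*(y+c₁)^2), Real.exp_nonneg (-(s^2/2)*(y+c₂)^2)]
  have hBint : Integrable B := by
    exact ((gauss_shift_integrable s c₁ hs).add (gauss_shift_integrable s c₂ hs)).const_mul _
  have hBintegral : ∫ y, B y = 2*K*Real.sqrt (2*Real.pi) := by
    rw [hB]
    simp only []
    rw [MeasureTheory.integral_const_mul, integral_add (gauss_shift_integrable s c₁ hs) (gauss_shift_integrable s c₂ hs),
      gauss_shift_integral s c₁ hs, gauss_shift_integral s c₂ hs]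
    field_simp
    ring
  have hL1 : (∫⁻ y, (‖f y‖₊ : ℝ≥0∞)) ≤ ENNReal.ofReal (2*K*Real.sqrt (2*Real.pi)) := by
    have step : (∫⁻ y, (‖f y‖₊ : ℝ≥0∞)) ≤ ∫⁻ y, ENNReal.ofReal (B y) := by
      apply lintegral_mono
      intro y
      show (‖f y‖₊ : ℝ≥0∞) ≤ ENNReal.ofReal (B y)
      rw [← enorm_eq_nnnorm, Real.enorm_eq_ofReal_abs]
      exact ENNReal.ofReal_le_ofReal (hf y)
    rw [← ofReal_integral_eq_lintegral_ofReal hBint (Filter.Eventually.of_forall hBnn),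
      hBintegral] at step
    exact step
  have hMb : ∀ y, (‖f y‖₊ : ℝ≥0∞) ≤ ENNReal.ofReal (2*K*s) := by
    intro y
    rw [← enorm_eq_nnnorm, Real.enorm_eq_ofReal_abs]
    exact ENNReal.ofReal_le_ofReal ((hf y).trans (hBle y))
  rcases eq_or_ne p ∞ with hptop | hptop
  · subst hptop
    rw [eLpNorm_exponent_top]
    simp only [ENNReal.toReal_top, div_zero, sub_zero, ENNReal.rpow_one, ENNReal.rpow_zero, mul_one]
    exact eLpNormEssSup_le_of_ae_bound (C := 2*K*s)
      (Filter.Eventually.of_forall (fun y => (Real.norm_eq_abs _ ▸ (hf y).trans (hBle y))))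
  · have hp0 : p ≠ 0 := by intro h; rw [h] at hp; exact absurd hp (by simp)
    set q := p.toReal with hq
    have hq1 : 1 ≤ q := by
      rw [hq, ← ENNReal.toReal_one]
      exact ENNReal.toReal_mono hptop hp
    have hq0 : 0 < q := lt_of_lt_of_le one_pos hq1
    rw [eLpNorm_eq_lintegral_rpow_enorm_toReal hp0 hptop]
    have key : ∀ y, ((‖f y‖₊ : ℝ≥0∞)) ^ q
        ≤ ENNReal.ofReal (2*K*s) ^ (q - 1) * (‖f y‖₊ : ℝ≥0∞) := by
      intro y
      rcases eq_or_ne (‖f y‖₊ : ℝ≥0∞) 0 with h0 | h0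
      · rw [h0, ENNReal.zero_rpow_of_pos hq0, mul_zero]
      · have hqsplit : q = (q - 1) + 1 := by ring
        have : ((‖f y‖₊ : ℝ≥0∞)) ^ q = ((‖f y‖₊ : ℝ≥0∞)) ^ (q - 1) * (‖f y‖₊ : ℝ≥0∞) := by
          rw [hqsplit, ENNReal.rpow_add _ _ h0 ENNReal.coe_ne_top, ENNReal.rpow_one]
          ring_nf
        rw [this]
        exact mul_le_mul_left (ENNReal.rpow_le_rpow (hMb y) (by linarith)) _
    calc (∫⁻ y, (‖f y‖₊ : ℝ≥0∞) ^ q) ^ (1/q)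
        ≤ (∫⁻ y, ENNReal.ofReal (2*K*s) ^ (q - 1) * (‖f y‖₊ : ℝ≥0∞)) ^ (1/q) :=
          ENNReal.rpow_le_rpow (lintegral_mono key) (by positivity)
      _ = (ENNReal.ofReal (2*K*s) ^ (q - 1) * ∫⁻ y, (‖f y‖₊ : ℝ≥0∞)) ^ (1/q) := by
          rw [lintegral_const_mul' _ _ (by
            exact ENNReal.rpow_ne_top_of_nonneg (by linarith) ENNReal.ofReal_ne_top)]
      _ ≤ (ENNReal.ofReal (2*K*s) ^ (q - 1) * ENNReal.ofReal (2*K*Real.sqrt (2*Real.pi))) ^ (1/q) :=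
          ENNReal.rpow_le_rpow (mul_le_mul_right hL1 _) (by positivity)
      _ = (ENNReal.ofReal (2*K*s) ^ (q - 1)) ^ (1/q) * ENNReal.ofReal (2*K*Real.sqrt (2*Real.pi)) ^ (1/q) :=
          ENNReal.mul_rpow_of_nonneg _ _ (by positivity)
      _ = ENNReal.ofReal (2*K*s) ^ (1 - 1/q) * ENNReal.ofReal (2*K*Real.sqrt (2*Real.pi)) ^ (1/q) := by
          rw [← ENNReal.rpow_mul]
          congr 1
          field_simp

/-- Time-derivative bound of Corollary 2.4: `‖∂_t e(·,t)‖_{L^p(ℝ)} ≤ C t^{-(1/2)(1-1/p)}`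
for the error-function kernel `e(y,t)`. -/
theorem stmt_7 (a : ℝ) (ha : 0 < a) (p : ENNReal) (hp : 1 ≤ p) :
    let g : ℝ → ℝ := fun z => Real.pi ^ (-(1:ℝ)/2) * Real.exp (-z^2)
    let errfn : ℝ → ℝ := fun z => ∫ w in Set.Iic z, g w
    let e : ℝ → ℝ → ℝ := fun y t =>
      errfn ((y + a*t) / Real.sqrt (4*(t+1))) - errfn ((y - a*t) / Real.sqrt (4*(t+1)))
    ∃ C > (0:ℝ), ∀ t : ℝ, 0 < t →
      MeasureTheory.eLpNorm (fun y => deriv (fun t' => e y t') t) p MeasureTheory.volume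
        ≤ ENNReal.ofReal (C * t ^ (-(1/2 : ℝ) * (1 - 1/p.toReal))) := by
  show ∃ C > (0:ℝ), ∀ t : ℝ, 0 < t →
      eLpNorm (fun y => deriv (fun t' =>
          (∫ w in Set.Iic ((y + a*t') / Real.sqrt (4*(t'+1))), Gs w)
          - ∫ w in Set.Iic ((y - a*t') / Real.sqrt (4*(t'+1))), Gs w) t) p volume
        ≤ ENNReal.ofReal (C * t ^ (-(1/2 : ℝ) * (1 - 1/p.toReal)))
  have hπ : (0:ℝ) < Real.pi ^ (-(1:ℝ)/2) := Real.rpow_pos_of_pos Real.pi_pos _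
  set K : ℝ := Real.pi ^ (-(1:ℝ)/2) * (a+1) with hKdef
  have hKpos : 0 < K := mul_pos hπ (by linarith)
  set C : ℝ := 2*K + 2*K*Real.sqrt (2*Real.pi) with hCdef
  have hCpos : 0 < C := by positivity
  refine ⟨C, hCpos, ?_⟩
  intro t ht
  -- basic facts about r and s
  set r : ℝ := Real.sqrt (4*(t+1)) with hrdef
  have hq4 : (0:ℝ) < 4*(t+1) := by linarith
  have hrpos : 0 < r := Real.sqrt_pos.mpr hq4
  have hr2 : 2 ≤ r := by
    have h4 : Real.sqrt 4 ≤ r := Real.sqrt_le_sqrt (by linarith)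
    have : Real.sqrt 4 = 2 := by
      rw [show (4:ℝ) = 2^2 by norm_num, Real.sqrt_sq (by norm_num : (0:ℝ) ≤ 2)]
    linarith
  set s : ℝ := r⁻¹ with hsdef
  have hspos : 0 < s := inv_pos.mpr hrpos
  have hs2 : s ≤ 1/2 := by
    rw [hsdef]
    rw [show (1:ℝ)/2 = 2⁻¹ by norm_num]
    exact inv_anti₀ (by norm_num) hr2
  -- identify the derivative
  have hderiv : (fun y : ℝ => deriv (fun t' =>
          (∫ w in Set.Iic ((y + a*t') / Real.sqrt (4*(t'+1))), Gs w)
          - ∫ w in Set.Iic ((y - a*t') / Real.sqrt (4*(t'+1))), Gs w) t)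
      = fun y => Gs ((y + a*t) * s) * (a * s - 2*((y + a*t) * s) * s^2)
          - Gs ((y + (-a)*t) * s) * ((-a) * s - 2*((y + (-a)*t) * s) * s^2) := by
    funext y
    have h1 := branch_hasDerivAt a y t ht
    have h2 := branch_hasDerivAt (-a) y t ht
    have hfun : (fun τ : ℝ => (∫ w in Set.Iic ((y + a*τ) / Real.sqrt (4*(τ+1))), Gs w)
            - ∫ w in Set.Iic ((y - a*τ) / Real.sqrt (4*(τ+1))), Gs w)
        = (fun τ : ℝ => (∫ w in Set.Iic ((y + a*τ) / Real.sqrt (4*(τ+1))), Gs w)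
            - ∫ w in Set.Iic ((y + (-a)*τ) / Real.sqrt (4*(τ+1))), Gs w) := by
      funext τ
      rw [show y - a*τ = y + (-a)*τ by ring]
    rw [hfun]
    exact (h1.sub h2).deriv
  rw [hderiv]
  -- pointwise bound and Lp estimate
  have hle := lp_bound
    (fun y => Gs ((y + a*t) * s) * (a * s - 2*((y + a*t) * s) * s^2)
      - Gs ((y + (-a)*t) * s) * ((-a) * s - 2*((y + (-a)*t) * s) * s^2))
    K s (a*t) (-(a*t)) hKpos.le hspos p hp (by
      intro y
      have b1 := branch_bound a a (y + a*t) s (le_of_eq (abs_of_pos ha)) hspos hs2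
      have b2 := branch_bound a (-a) (y + (-a)*t) s (by rw [abs_neg, abs_of_pos ha]) hspos hs2
      have habs := abs_sub (Gs ((y + a*t) * s) * (a * s - 2*((y + a*t) * s) * s^2))
        (Gs ((y + (-a)*t) * s) * ((-a) * s - 2*((y + (-a)*t) * s) * s^2))
      have heq1 : y + (-a)*t = y + -(a*t) := by ring
      rw [heq1] at b2
      rw [hKdef]
      calc |Gs ((y + a*t) * s) * (a * s - 2*((y + a*t) * s) * s^2)
          - Gs ((y + (-a)*t) * s) * ((-a) * s - 2*((y + (-a)*t) * s) * s^2)|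
          ≤ |Gs ((y + a*t) * s) * (a * s - 2*((y + a*t) * s) * s^2)|
            + |Gs ((y + (-a)*t) * s) * ((-a) * s - 2*((y + (-a)*t) * s) * s^2)| := habs
        _ ≤ Real.pi ^ (-(1:ℝ)/2) * (a+1) * s * Real.exp (-(s^2/2)*(y + a*t)^2)
            + Real.pi ^ (-(1:ℝ)/2) * (a+1) * s * Real.exp (-(s^2/2)*(y + -(a*t))^2) := by
              rw [heq1]; exact add_le_add b1 b2
        _ = Real.pi ^ (-(1:ℝ)/2) * (a+1) * s * (Real.exp (-(s^2/2)*(y + a*t)^2)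
            + Real.exp (-(s^2/2)*(y + -(a*t))^2)) := by ring)
  refine le_trans hle ?_
  -- compare s with t^(-1/2)
  have hs_le : s ≤ t ^ (-(1/2):ℝ) := by
    have h1 : t ^ (-(1/2):ℝ) = (Real.sqrt t)⁻¹ := by
      rw [Real.rpow_neg ht.le, Real.sqrt_eq_rpow]
    rw [h1, hsdef]
    exact inv_anti₀ (Real.sqrt_pos.mpr ht) (Real.sqrt_le_sqrt (by linarith))
  set θ : ℝ := 1 - 1/p.toReal with hθdef
  have h1q0 : 0 ≤ 1/p.toReal := by positivity
  have h1q1 : 1/p.toReal ≤ 1 := by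
    rcases eq_or_ne p ∞ with h | h
    · simp [h]
    · have : 1 ≤ p.toReal := by
        rw [← ENNReal.toReal_one]; exact ENNReal.toReal_mono h hp
      rw [div_le_one (by linarith)]; linarith
  have hθ0 : 0 ≤ θ := by rw [hθdef]; linarith
  have hofC : ENNReal.ofReal C ≠ 0 := (ENNReal.ofReal_pos.mpr hCpos).ne'
  calc ENNReal.ofReal (2*K*s) ^ θ * ENNReal.ofReal (2*K*Real.sqrt (2*Real.pi)) ^ (1/p.toReal)
      ≤ (ENNReal.ofReal (2*K) * ENNReal.ofReal (t ^ (-(1/2):ℝ))) ^ θ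
        * ENNReal.ofReal C ^ (1/p.toReal) := by
        refine mul_le_mul' (ENNReal.rpow_le_rpow ?_ hθ0) (ENNReal.rpow_le_rpow ?_ h1q0)
        · rw [← ENNReal.ofReal_mul (by positivity)]
          exact ENNReal.ofReal_le_ofReal (by nlinarith)
        · exact ENNReal.ofReal_le_ofReal (by nlinarith [Real.sqrt_nonneg (2*Real.pi)])
    _ = ENNReal.ofReal (2*K) ^ θ * ENNReal.ofReal (t ^ (-(1/2):ℝ)) ^ θ
        * ENNReal.ofReal C ^ (1/p.toReal) := by
        rw [ENNReal.mul_rpow_of_nonneg _ _ hθ0]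
    _ ≤ ENNReal.ofReal C ^ θ * ENNReal.ofReal (t ^ (-(1/2):ℝ)) ^ θ
        * ENNReal.ofReal C ^ (1/p.toReal) := by
        refine mul_le_mul' (mul_le_mul' (ENNReal.rpow_le_rpow ?_ hθ0) le_rfl) le_rfl
        exact ENNReal.ofReal_le_ofReal (by nlinarith [Real.sqrt_nonneg (2*Real.pi)])
    _ = ENNReal.ofReal C ^ (θ + 1/p.toReal) * ENNReal.ofReal (t ^ (-(1/2):ℝ)) ^ θ := by
        rw [ENNReal.rpow_add _ _ hofC ENNReal.ofReal_ne_top]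
        ring
    _ = ENNReal.ofReal C * ENNReal.ofReal (t ^ (-(1/2):ℝ)) ^ θ := by
        rw [show θ + 1/p.toReal = 1 by rw [hθdef]; ring, ENNReal.rpow_one]
    _ = ENNReal.ofReal (C * t ^ (-(1/2:ℝ) * θ)) := by
        rw [ENNReal.ofReal_rpow_of_pos (Real.rpow_pos_of_pos ht _),
          ← Real.rpow_mul ht.le,
          ← ENNReal.ofReal_mul hCpos.le]
end

section
/- Fix a > 0. Define g(z) := π^{−1/2} e^{−z²}, errfn(z) := ∫_{−∞}^{z} g(w) dw, and for t > 0, y ∈ ℝ, e(y, t) := errfn((y + a t)/√(4(t+1))) − errfn((y − a t)/√(4(t+1))). Then for each p ∈ [1, ∞] there is a constant C > 0 such that for all t > 0, the L^p norm in y over ℝ of the mixed derivative ∂_t ∂_y e(·, t) satisfies ‖∂_t ∂_y e(·, t)‖_{L^p(ℝ)} ≤ C t^{−(1/2)(1 − 1/p) − 1/2}. -/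
open MeasureTheory Real
open scoped ENNReal NNReal

private lemma st8_c_pos : 0 < Real.pi ^ (-(1:ℝ)/2) := Real.rpow_pos_of_pos Real.pi_pos _

private lemma st8_g_integrable :
    Integrable (fun z : ℝ => Real.pi ^ (-(1:ℝ)/2) * Real.exp (-z^2)) volume := by
  have h : Integrable (fun z : ℝ => Real.exp (-1 * z^2)) volume :=
    integrable_exp_neg_mul_sq one_pos
  simpa [neg_mul] using h.const_mul (Real.pi ^ (-(1:ℝ)/2))

private lemma st8_errfn_hasDeriv (x : ℝ) :
    HasDerivAt (fun z : ℝ => ∫ w in Set.Iic z, Real.pi ^ (-(1:ℝ)/2) * Real.exp (-w^2))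
      (Real.pi ^ (-(1:ℝ)/2) * Real.exp (-x^2)) x := by
  set g : ℝ → ℝ := fun z => Real.pi ^ (-(1:ℝ)/2) * Real.exp (-z^2) with hg
  have hgc : Continuous g := by fun_prop
  have hfe : (fun z : ℝ => ∫ w in Set.Iic z, g w)
      = fun z => (∫ w in Set.Iic (0:ℝ), g w) + ∫ w in (0:ℝ)..z, g w := by
    funext z
    rw [← intervalIntegral.integral_Iic_sub_Iic st8_g_integrable.integrableOn
      st8_g_integrable.integrableOn]
    ring
  rw [hfe]
  have hd : HasDerivAt (fun z : ℝ => ∫ w in (0:ℝ)..z, g w) (g x) x :=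
    intervalIntegral.integral_hasDerivAt_right st8_g_integrable.intervalIntegrable
      hgc.aestronglyMeasurable.stronglyMeasurableAtFilter hgc.continuousAt
  simpa using (hd.const_add (∫ w in Set.Iic (0:ℝ), g w))

private lemma st8_g_hasDeriv (z : ℝ) :
    HasDerivAt (fun w : ℝ => Real.pi ^ (-(1:ℝ)/2) * Real.exp (-w^2))
      (Real.pi ^ (-(1:ℝ)/2) * Real.exp (-z^2) * (-(2*z))) z := by
  have h1 : HasDerivAt (fun w : ℝ => -w^2) (-(2*z)) z := by
    simpa using (hasDerivAt_pow 2 z).fun_neg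
  have h2 : HasDerivAt (fun w : ℝ => Real.exp (-w^2)) (Real.exp (-z^2) * (-(2*z))) z := by
    simpa [Function.comp_def] using (Real.hasDerivAt_exp (-z^2)).comp z h1
  have h3 := h2.const_mul (Real.pi ^ (-(1:ℝ)/2))
  rw [mul_assoc]
  exact h3

/-- derivative in `y` of the kernel. -/
private lemma st8_deriv_y (aa t y : ℝ) :
    deriv (fun y' : ℝ =>
        (∫ w in Set.Iic ((y' + aa*t)/Real.sqrt (4*(t+1))),
          Real.pi ^ (-(1:ℝ)/2) * Real.exp (-w^2))
        - ∫ w in Set.Iic ((y' - aa*t)/Real.sqrt (4*(t+1))),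
          Real.pi ^ (-(1:ℝ)/2) * Real.exp (-w^2)) y
      = (Real.pi ^ (-(1:ℝ)/2) * Real.exp (-(((y + aa*t)/Real.sqrt (4*(t+1))))^2)
          - Real.pi ^ (-(1:ℝ)/2) * Real.exp (-(((y - aa*t)/Real.sqrt (4*(t+1))))^2))
          / Real.sqrt (4*(t+1)) := by
  set s := Real.sqrt (4*(t+1)) with hs
  have hp : HasDerivAt (fun y' : ℝ => (y' + aa*t)/s) (1/s) y := by
    simpa using ((hasDerivAt_id y).add_const (aa*t)).div_const s
  have hm : HasDerivAt (fun y' : ℝ => (y' - aa*t)/s) (1/s) y := by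
    simpa using ((hasDerivAt_id y).sub_const (aa*t)).div_const s
  have hdp := (st8_errfn_hasDeriv ((y + aa*t)/s)).comp y hp
  have hdm := (st8_errfn_hasDeriv ((y - aa*t)/s)).comp y hm
  have hd := hdp.fun_sub hdm
  simp only [Function.comp_def] at hd
  rw [hd.deriv]
  ring

private lemma st8_abs_exp (Z : ℝ) : |Z| * Real.exp (-Z^2/2) ≤ 1 := by
  have h := Real.add_one_le_exp (Z^2/2)
  have h2 : |Z| ≤ Real.exp (Z^2/2) := by nlinarith [sq_abs Z, sq_nonneg (|Z| - 1)]
  calc |Z| * Real.exp (-Z^2/2) ≤ Real.exp (Z^2/2) * Real.exp (-Z^2/2) :=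
        mul_le_mul_of_nonneg_right h2 (Real.exp_nonneg _)
    _ = 1 := by rw [← Real.exp_add]; ring_nf; exact Real.exp_zero

private lemma st8_sq_exp (Z : ℝ) : Z^2 * Real.exp (-Z^2/2) ≤ 2 := by
  have h := Real.add_one_le_exp (Z^2/2)
  have h2 : Z^2 ≤ 2 * Real.exp (Z^2/2) := by nlinarith
  calc Z^2 * Real.exp (-Z^2/2) ≤ (2 * Real.exp (Z^2/2)) * Real.exp (-Z^2/2) :=
        mul_le_mul_of_nonneg_right h2 (Real.exp_nonneg _)
    _ = 2 := by rw [mul_assoc, ← Real.exp_add]; ring_nf; rw [Real.exp_zero]; ring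

/-- single-branch bound -/
private lemma st8_branch (aa u : ℝ) (ha : 0 < aa) (hu : 2 ≤ u) (Z w : ℝ)
    (hw : |w| * u ≤ aa + |Z|) :
    |Real.pi ^ (-(1:ℝ)/2) * Real.exp (-Z^2) * (-(2*Z)) * w| * u
      + (Real.pi ^ (-(1:ℝ)/2) * Real.exp (-Z^2)) * (1/(2*u)*4)
      ≤ Real.pi ^ (-(1:ℝ)/2) * (2*aa+5) * Real.exp (-Z^2/2) := by
  set c := Real.pi ^ (-(1:ℝ)/2) with hc
  have hc0 : 0 < c := st8_c_pos
  have hu0 : (0:ℝ) < u := lt_of_lt_of_le two_pos hu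
  set E := Real.exp (-Z^2/2) with hE
  have hE0 : 0 < E := Real.exp_pos _
  have hE1 : E ≤ 1 := Real.exp_le_one_iff.mpr (by nlinarith [sq_nonneg Z])
  have hEE : Real.exp (-Z^2) = E * E := by rw [← Real.exp_add]; ring_nf
  have hX := st8_abs_exp Z
  have hY := st8_sq_exp Z
  have hdu : 1/(2*u)*4 ≤ 1 := by
    rw [div_mul_eq_mul_div, one_mul, div_le_one (by positivity)]
    linarith
  have hdu0 : 0 ≤ 1/(2*u)*4 := by positivity
  have hterm1 : |c * Real.exp (-Z^2) * (-(2*Z)) * w| * u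
      = c * Real.exp (-Z^2) * (2*|Z|) * (|w| * u) := by
    rw [abs_mul, abs_mul, abs_mul, abs_of_pos hc0, abs_of_pos (Real.exp_pos _), abs_neg,
      abs_mul, abs_two]
    ring
  rw [hterm1, hEE]
  have h1 : c * (E*E) * (2*|Z|) * (|w| * u) ≤ c * (E*E) * (2*|Z|) * (aa + |Z|) :=
    mul_le_mul_of_nonneg_left hw (by positivity)
  have h2 : c * (E*E) * (1/(2*u)*4) ≤ c * (E*E) * 1 :=
    mul_le_mul_of_nonneg_left hdu (by positivity)
  have h3 : c * (E*E) * (2*|Z|) * (aa + |Z|) + c * (E*E) * 1 ≤ c * (2*aa+5) * E := by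
    have b1 : |Z| * E * E ≤ E := by
      calc |Z| * E * E ≤ 1*E := mul_le_mul_of_nonneg_right hX hE0.le
        _ = E := one_mul E
    have b2 : |Z| * |Z| * E * E ≤ 2*E := by
      have hzz : |Z| * |Z| = Z^2 := by rw [← sq_abs Z]; ring
      rw [hzz]; exact mul_le_mul_of_nonneg_right hY hE0.le
    have b3 : E*E ≤ E := by
      calc E*E ≤ 1*E := mul_le_mul_of_nonneg_right hE1 hE0.le
        _ = E := one_mul E
    have key : 2*aa*(|Z| * E * E) + 2*(|Z| * |Z| * E * E) + E*E ≤ (2*aa+5)*E := by nlinarith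
    calc c * (E*E) * (2*|Z|) * (aa + |Z|) + c * (E*E) * 1
        = c * (2*aa*(|Z| * E * E) + 2*(|Z| * |Z| * E * E) + E*E) := by ring
      _ ≤ c * ((2*aa+5)*E) := mul_le_mul_of_nonneg_left key hc0.le
      _ = c * (2*aa+5) * E := by ring
  linarith

private lemma st8_w_bound (aa u q : ℝ) (hu : 2 ≤ u) :
    |(aa*u - q*(1/(2*u)*4))/u^2| * u ≤ |aa| + |q/u| := by
  have hu0 : (0:ℝ) < u := by linarith
  have heq : (aa*u - q*(1/(2*u)*4))/u^2 * u = aa - 2*(q/u)/u := by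
    field_simp
    ring
  calc |(aa*u - q*(1/(2*u)*4))/u^2| * u = |(aa*u - q*(1/(2*u)*4))/u^2 * u| := by
        rw [abs_mul, abs_of_pos hu0]
    _ = |aa - 2*(q/u)/u| := by rw [heq]
    _ ≤ |aa| + |2*(q/u)/u| := abs_sub _ _
    _ ≤ |aa| + |q/u| := by
        have he2 : |2*(q/u)/u| = |q/u| * (2/u) := by
          rw [abs_div, abs_mul, abs_two, abs_of_pos hu0]
          ring
        rw [he2]
        have h2u : 2/u ≤ 1 := by rw [div_le_one hu0]; linarith
        nlinarith [abs_nonneg (q/u)]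

private lemma st8_deriv_t (a y t : ℝ) (ht : 0 < t) :
    HasDerivAt (fun t' : ℝ =>
      (Real.pi ^ (-(1:ℝ)/2) * Real.exp (-(((y + a*t')/Real.sqrt (4*(t'+1))))^2)
        - Real.pi ^ (-(1:ℝ)/2) * Real.exp (-(((y - a*t')/Real.sqrt (4*(t'+1))))^2))
        / Real.sqrt (4*(t'+1)))
      (((Real.pi ^ (-(1:ℝ)/2) * Real.exp (-(((y + a*t)/Real.sqrt (4*(t+1))))^2)
            * (-(2*((y + a*t)/Real.sqrt (4*(t+1)))))
            * ((a * Real.sqrt (4*(t+1)) - (y + a*t) * (1/(2*Real.sqrt (4*(t+1)))*4))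
               / Real.sqrt (4*(t+1))^2)
        - Real.pi ^ (-(1:ℝ)/2) * Real.exp (-(((y - a*t)/Real.sqrt (4*(t+1))))^2)
            * (-(2*((y - a*t)/Real.sqrt (4*(t+1)))))
            * ((-a * Real.sqrt (4*(t+1)) - (y - a*t) * (1/(2*Real.sqrt (4*(t+1)))*4))
               / Real.sqrt (4*(t+1))^2))
        * Real.sqrt (4*(t+1))
        - (Real.pi ^ (-(1:ℝ)/2) * Real.exp (-(((y + a*t)/Real.sqrt (4*(t+1))))^2)
            - Real.pi ^ (-(1:ℝ)/2) * Real.exp (-(((y - a*t)/Real.sqrt (4*(t+1))))^2))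
          * (1/(2*Real.sqrt (4*(t+1)))*4))
        / Real.sqrt (4*(t+1))^2) t := by
  have h40 : (0:ℝ) < 4*(t+1) := by linarith
  have hune : Real.sqrt (4*(t+1)) ≠ 0 := (Real.sqrt_pos.mpr h40).ne'
  have hu4 : HasDerivAt (fun t' : ℝ => 4*(t'+1)) 4 t := by
    simpa using ((hasDerivAt_id t).add_const 1).const_mul 4
  have hU : HasDerivAt (fun t' : ℝ => Real.sqrt (4*(t'+1)))
      (1/(2*Real.sqrt (4*(t+1)))*4) t := by
    have h := (Real.hasDerivAt_sqrt h40.ne').comp t hu4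
    simp only [Function.comp_def] at h
    exact h
  have hnp : HasDerivAt (fun t' : ℝ => y + a*t') a t := by
    simpa using ((hasDerivAt_id t).const_mul a).const_add y
  have hnm : HasDerivAt (fun t' : ℝ => y - a*t') (-a) t := by
    have h := ((hasDerivAt_id t).const_mul a).const_sub y
    simpa using h
  have hzp := hnp.div hU hune
  have hzm := hnm.div hU hune
  have hgp := (st8_g_hasDeriv ((y + a*t)/Real.sqrt (4*(t+1)))).comp t hzp
  have hgm := (st8_g_hasDeriv ((y - a*t)/Real.sqrt (4*(t+1)))).comp t hzm
  simp only [Function.comp_def] at hgp hgm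
  exact (hgp.sub hgm).div hU hune

lemma st8_integ_gauss (b : ℝ) (hb : 0 < b) (c₀ u : ℝ) (hu : u ≠ 0) :
    Integrable (fun y : ℝ => Real.exp (-(b * ((y - c₀)/u)^2))) volume := by
  have h : Integrable (fun y : ℝ => Real.exp (-(b/u^2) * y^2)) volume :=
    integrable_exp_neg_mul_sq (by positivity)
  have h2 := h.comp_sub_right c₀
  convert h2 using 2 with y
  field_simp

lemma st8_int_gauss (b : ℝ) (c₀ u : ℝ) :
    (∫ y : ℝ, Real.exp (-(b * ((y - c₀)/u)^2))) = |u| * Real.sqrt (π / b) := by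
  rw [integral_sub_right_eq_self (fun y : ℝ => Real.exp (-(b * (y/u)^2))) c₀]
  have h := MeasureTheory.Measure.integral_comp_div (fun x : ℝ => Real.exp (-(b * x^2))) u
  rw [h]
  have h2 : (∫ x : ℝ, Real.exp (-(b*x^2))) = Real.sqrt (π / b) := by
    simpa [neg_mul] using integral_gaussian b
  rw [h2, smul_eq_mul]

lemma st8_gauss_lp (p : ENNReal) (hp : 1 ≤ p) (c₀ u : ℝ) (hu : 1 ≤ u) :
    eLpNorm (fun y : ℝ => Real.exp (-(((y - c₀)/u)^2/2))) p volume
      ≤ ENNReal.ofReal (Real.sqrt (2*π) * u ^ (1/p.toReal)) := by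
  have hsq : (1:ℝ) ≤ Real.sqrt (2*π) := by
    rw [show (1:ℝ) = Real.sqrt 1 from (Real.sqrt_one).symm]
    exact Real.sqrt_le_sqrt (by nlinarith [Real.pi_gt_three])
  have hu0 : (0:ℝ) < u := lt_of_lt_of_le one_pos hu
  by_cases hptop : p = ⊤
  · subst hptop
    rw [eLpNorm_exponent_top]
    have hb : eLpNormEssSup (fun y : ℝ => Real.exp (-(((y - c₀)/u)^2/2))) volume
        ≤ ENNReal.ofReal 1 := by
      apply eLpNormEssSup_le_of_ae_bound
      filter_upwards with y
      rw [Real.norm_eq_abs, abs_of_pos (Real.exp_pos _)]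
      exact Real.exp_le_one_iff.mpr (neg_nonpos.mpr (by positivity))
    refine hb.trans (ENNReal.ofReal_le_ofReal ?_)
    simp only [ENNReal.toReal_top, div_zero, Real.rpow_zero, mul_one]
    exact hsq
  · have hq1 : 1 ≤ p.toReal := by simpa using ENNReal.toReal_mono hptop hp
    have hq0 : 0 < p.toReal := lt_of_lt_of_le one_pos hq1
    have hp0 : p ≠ 0 := (lt_of_lt_of_le zero_lt_one hp).ne'
    rw [eLpNorm_eq_lintegral_rpow_enorm_toReal hp0 hptop]
    have key : ∀ y : ℝ, (‖Real.exp (-(((y - c₀)/u)^2/2))‖ₑ ^ p.toReal)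
        = ENNReal.ofReal (Real.exp (-(p.toReal/2 * ((y - c₀)/u)^2))) := by
      intro y
      rw [← ofReal_norm_eq_enorm, Real.norm_eq_abs, abs_of_pos (Real.exp_pos _),
        ENNReal.ofReal_rpow_of_pos (Real.exp_pos _)]
      congr 1
      rw [← Real.exp_mul]
      ring_nf
    simp_rw [key]
    rw [← ofReal_integral_eq_lintegral_ofReal
        (st8_integ_gauss _ (by positivity) c₀ u hu0.ne')
        (Filter.Eventually.of_forall fun y => Real.exp_nonneg _)]
    rw [st8_int_gauss]
    have h3 : |u| * Real.sqrt (π / (p.toReal/2)) ≤ u * Real.sqrt (2*π) := by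
      rw [abs_of_pos hu0]
      gcongr
      rw [div_div_eq_mul_div, mul_comm]
      exact div_le_self (by positivity) hq1
    calc (ENNReal.ofReal (|u| * Real.sqrt (π / (p.toReal/2)))) ^ (1/p.toReal)
        ≤ (ENNReal.ofReal (u * Real.sqrt (2*π))) ^ (1/p.toReal) :=
          ENNReal.rpow_le_rpow (ENNReal.ofReal_le_ofReal h3) (by positivity)
      _ = ENNReal.ofReal ((u * Real.sqrt (2*π)) ^ (1/p.toReal)) :=
          ENNReal.ofReal_rpow_of_pos (by positivity)
      _ ≤ ENNReal.ofReal (Real.sqrt (2*π) * u ^ (1/p.toReal)) := by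
          apply ENNReal.ofReal_le_ofReal
          rw [Real.mul_rpow (le_of_lt hu0) (Real.sqrt_nonneg _), mul_comm]
          gcongr
          calc Real.sqrt (2*π) ^ (1/p.toReal) ≤ Real.sqrt (2*π) ^ (1:ℝ) :=
                Real.rpow_le_rpow_of_exponent_le hsq (by rw [div_le_one hq0]; exact hq1)
            _ = Real.sqrt (2*π) := Real.rpow_one _

private lemma st8_tri (A1 A2 B1 B2 u d R1 R2 : ℝ) (hu : 0 < u) (hd : 0 ≤ d)
    (hB1 : 0 ≤ B1) (hB2 : 0 ≤ B2)
    (h1 : |A1| * u + B1 * d ≤ R1) (h2 : |A2| * u + B2 * d ≤ R2) :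
    |(A1 - A2) * u - (B1 - B2) * d| ≤ R1 + R2 := by
  have t1 : |(A1 - A2) * u - (B1 - B2) * d| ≤ |(A1 - A2)*u| + |(B1 - B2)*d| := abs_sub _ _
  have t2 : |(A1 - A2)*u| = |A1 - A2| * u := by rw [abs_mul, abs_of_pos hu]
  have t3 : |(B1 - B2)*d| = |B1 - B2| * d := by rw [abs_mul, abs_of_nonneg hd]
  have t4 : |A1 - A2| ≤ |A1| + |A2| := abs_sub _ _
  have t5 : |B1 - B2| ≤ B1 + B2 := by
    calc |B1 - B2| ≤ |B1| + |B2| := abs_sub _ _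
      _ = B1 + B2 := by rw [abs_of_nonneg hB1, abs_of_nonneg hB2]
  nlinarith [mul_le_mul_of_nonneg_right t4 hu.le, mul_le_mul_of_nonneg_right t5 hd]

set_option maxHeartbeats 2000000 in
private lemma st8_main (a : ℝ) (ha : 0 < a) (p : ENNReal) (hp : 1 ≤ p) :
    ∃ C > (0:ℝ), ∀ t : ℝ, 0 < t →
      MeasureTheory.eLpNorm
          (fun y => deriv (fun t' => deriv (fun y' : ℝ =>
            (∫ w in Set.Iic ((y' + a*t')/Real.sqrt (4*(t'+1))),
              Real.pi ^ (-(1:ℝ)/2) * Real.exp (-w^2))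
            - ∫ w in Set.Iic ((y' - a*t')/Real.sqrt (4*(t'+1))),
              Real.pi ^ (-(1:ℝ)/2) * Real.exp (-w^2)) y) t) p MeasureTheory.volume
        ≤ ENNReal.ofReal ((2 * Real.sqrt (2*Real.pi) * (Real.pi ^ (-(1:ℝ)/2) * (2*a+5)))
            * t ^ (-(1/2 : ℝ) * (1 - 1/p.toReal) - 1/2)) := by
  have hc0 : 0 < Real.pi ^ (-(1:ℝ)/2) := st8_c_pos
  refine ⟨2 * Real.sqrt (2*Real.pi) * (Real.pi ^ (-(1:ℝ)/2) * (2*a+5)),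
    by positivity, ?_⟩
  intro t ht
  have h40 : (0:ℝ) < 4*(t+1) := by linarith
  set u := Real.sqrt (4*(t+1)) with hu_def
  have hu2 : 2 ≤ u := by
    have h4 : Real.sqrt 4 = 2 := by
      rw [show (4:ℝ) = 2^2 by norm_num]
      exact Real.sqrt_sq (by norm_num)
    calc (2:ℝ) = Real.sqrt 4 := h4.symm
      _ ≤ u := Real.sqrt_le_sqrt (by linarith)
  have hu0 : (0:ℝ) < u := lt_of_lt_of_le two_pos hu2
  have hu1 : (1:ℝ) ≤ u := by linarith
  -- pointwise bound
  have hpoint : ∀ y : ℝ, ‖deriv (fun t' => deriv (fun y' : ℝ =>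
            (∫ w in Set.Iic ((y' + a*t')/Real.sqrt (4*(t'+1))),
              Real.pi ^ (-(1:ℝ)/2) * Real.exp (-w^2))
            - ∫ w in Set.Iic ((y' - a*t')/Real.sqrt (4*(t'+1))),
              Real.pi ^ (-(1:ℝ)/2) * Real.exp (-w^2)) y) t‖ ≤
      (Real.pi ^ (-(1:ℝ)/2) * (2*a+5)/u^2) * Real.exp (-(((y - -(a*t))/u)^2/2))
        + (Real.pi ^ (-(1:ℝ)/2) * (2*a+5)/u^2) * Real.exp (-(((y - a*t)/u)^2/2)) := by
    intro y
    have h1 : (fun t' : ℝ => deriv (fun y' : ℝ =>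
            (∫ w in Set.Iic ((y' + a*t')/Real.sqrt (4*(t'+1))),
              Real.pi ^ (-(1:ℝ)/2) * Real.exp (-w^2))
            - ∫ w in Set.Iic ((y' - a*t')/Real.sqrt (4*(t'+1))),
              Real.pi ^ (-(1:ℝ)/2) * Real.exp (-w^2)) y)
        = fun t' : ℝ =>
          (Real.pi ^ (-(1:ℝ)/2) * Real.exp (-(((y + a*t')/Real.sqrt (4*(t'+1))))^2)
            - Real.pi ^ (-(1:ℝ)/2) * Real.exp (-(((y - a*t')/Real.sqrt (4*(t'+1))))^2))
            / Real.sqrt (4*(t'+1)) :=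
      funext fun t' => st8_deriv_y a t' y
    rw [h1, (st8_deriv_t a y t ht).deriv, Real.norm_eq_abs, ← hu_def]
    have hwp : |(a*u - (y+a*t)*(1/(2*u)*4))/u^2| * u ≤ a + |(y+a*t)/u| := by
      have h := st8_w_bound a u (y+a*t) hu2
      rwa [abs_of_pos ha] at h
    have hwm : |(-a*u - (y-a*t)*(1/(2*u)*4))/u^2| * u ≤ a + |(y-a*t)/u| := by
      have h := st8_w_bound (-a) u (y-a*t) hu2
      rwa [abs_neg, abs_of_pos ha] at h
    have bp := st8_branch a u ha hu2 ((y+a*t)/u)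
      ((a*u - (y+a*t)*(1/(2*u)*4))/u^2) hwp
    have bm := st8_branch a u ha hu2 ((y-a*t)/u)
      ((-a*u - (y-a*t)*(1/(2*u)*4))/u^2) hwm
    have hd0 : (0:ℝ) ≤ 1/(2*u)*4 := by positivity
    have htri := st8_tri
      (Real.pi ^ (-(1:ℝ)/2) * Real.exp (-(((y + a*t)/u))^2) * (-(2*((y + a*t)/u)))
        * ((a*u - (y+a*t)*(1/(2*u)*4))/u^2))
      (Real.pi ^ (-(1:ℝ)/2) * Real.exp (-(((y - a*t)/u))^2) * (-(2*((y - a*t)/u)))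
        * ((-a*u - (y-a*t)*(1/(2*u)*4))/u^2))
      (Real.pi ^ (-(1:ℝ)/2) * Real.exp (-(((y + a*t)/u))^2))
      (Real.pi ^ (-(1:ℝ)/2) * Real.exp (-(((y - a*t)/u))^2))
      u (1/(2*u)*4) _ _ hu0 hd0 (by positivity) (by positivity) bp bm
    rw [abs_div, abs_of_pos (show (0:ℝ) < u^2 by positivity)]
    refine le_trans ((div_le_div_iff_of_pos_right (show (0:ℝ) < u^2 by positivity)).mpr htri)
      (le_of_eq ?_)
    have hEp : Real.exp (-((y + a*t)/u)^2/2) = Real.exp (-(((y - -(a*t))/u)^2/2)) := by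
      congr 1
      rw [sub_neg_eq_add]
      ring
    have hEm : Real.exp (-((y - a*t)/u)^2/2) = Real.exp (-(((y - a*t)/u)^2/2)) := by
      congr 1
      ring
    rw [hEp, hEm]
    ring
  refine le_trans (eLpNorm_mono_real
    (g := fun y : ℝ => (Real.pi ^ (-(1:ℝ)/2) * (2*a+5)/u^2)
        * Real.exp (-(((y - -(a*t))/u)^2/2))
      + (Real.pi ^ (-(1:ℝ)/2) * (2*a+5)/u^2) * Real.exp (-(((y - a*t)/u)^2/2)))
    hpoint) ?_
  have hc1 : Continuous (fun y : ℝ => (Real.pi ^ (-(1:ℝ)/2) * (2*a+5)/u^2)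
      * Real.exp (-(((y - -(a*t))/u)^2/2))) := by fun_prop
  have hc2 : Continuous (fun y : ℝ => (Real.pi ^ (-(1:ℝ)/2) * (2*a+5)/u^2)
      * Real.exp (-(((y - a*t)/u)^2/2))) := by fun_prop
  have hm0 : (0:ℝ) ≤ Real.pi ^ (-(1:ℝ)/2) * (2*a+5)/u^2 := by positivity
  have hsmul : ∀ c₀ : ℝ, eLpNorm (fun y : ℝ => (Real.pi ^ (-(1:ℝ)/2) * (2*a+5)/u^2)
      * Real.exp (-(((y - c₀)/u)^2/2))) p volume
      ≤ ENNReal.ofReal (Real.pi ^ (-(1:ℝ)/2) * (2*a+5)/u^2)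
        * ENNReal.ofReal (Real.sqrt (2*Real.pi) * u ^ (1/p.toReal)) := by
    intro c₀
    have he : (fun y : ℝ => (Real.pi ^ (-(1:ℝ)/2) * (2*a+5)/u^2)
        * Real.exp (-(((y - c₀)/u)^2/2)))
        = (Real.pi ^ (-(1:ℝ)/2) * (2*a+5)/u^2)
          • (fun y : ℝ => Real.exp (-(((y - c₀)/u)^2/2))) := rfl
    rw [he, eLpNorm_const_smul]
    rw [Real.enorm_eq_ofReal hm0]
    exact mul_le_mul_right (st8_gauss_lp p hp c₀ u hu1) _
  refine le_trans (eLpNorm_add_le hc1.aestronglyMeasurable hc2.aestronglyMeasurable hp) ?_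
  refine le_trans (add_le_add (hsmul (-(a*t))) (hsmul (a*t))) ?_
  rw [← ENNReal.ofReal_mul hm0, ← ENNReal.ofReal_add (by positivity) (by positivity)]
  apply ENNReal.ofReal_le_ofReal
  have hr0 : (0:ℝ) ≤ 1/p.toReal := by positivity
  have hr1 : 1/p.toReal ≤ 1 := by
    by_cases hptop : p = ⊤
    · simp [hptop]
    · have h1 : 1 ≤ p.toReal := by simpa using ENNReal.toReal_mono hptop hp
      rw [div_le_one (by linarith)]
      linarith
  have hst0 : (0:ℝ) < Real.sqrt t := Real.sqrt_pos.mpr ht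
  have hsqt : Real.sqrt t ≤ u := Real.sqrt_le_sqrt (by linarith)
  have h1 : u ^ (1/p.toReal) / u^2 = u ^ (1/p.toReal - 2) := by
    rw [Real.rpow_sub hu0]
    congr 1
    rw [show (2:ℝ) = ((2:ℕ):ℝ) by norm_num, Real.rpow_natCast]
  have h2 : u ^ (1/p.toReal - 2) ≤ (Real.sqrt t) ^ (1/p.toReal - 2) :=
    Real.rpow_le_rpow_of_nonpos hst0 hsqt (by linarith)
  have h3 : (Real.sqrt t) ^ (1/p.toReal - 2)
      = t ^ (-(1/2 : ℝ) * (1 - 1/p.toReal) - 1/2) := by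
    rw [Real.sqrt_eq_rpow, ← Real.rpow_mul ht.le]
    congr 1
    ring
  have hur : u ^ (1/p.toReal) / u^2 ≤ t ^ (-(1/2 : ℝ) * (1 - 1/p.toReal) - 1/2) := by
    rw [h1]
    exact h2.trans (le_of_eq h3)
  calc Real.pi ^ (-(1:ℝ)/2) * (2*a+5)/u^2 * (Real.sqrt (2*Real.pi) * u ^ (1/p.toReal))
        + Real.pi ^ (-(1:ℝ)/2) * (2*a+5)/u^2 * (Real.sqrt (2*Real.pi) * u ^ (1/p.toReal))
      = (2 * Real.sqrt (2*Real.pi) * (Real.pi ^ (-(1:ℝ)/2) * (2*a+5)))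
        * (u ^ (1/p.toReal) / u^2) := by ring
    _ ≤ (2 * Real.sqrt (2*Real.pi) * (Real.pi ^ (-(1:ℝ)/2) * (2*a+5)))
        * t ^ (-(1/2 : ℝ) * (1 - 1/p.toReal) - 1/2) :=
      mul_le_mul_of_nonneg_left hur (by positivity)

/-- Mixed-derivative bound of Corollary 2.4:
`‖∂_t ∂_y e(·,t)‖_{L^p(ℝ)} ≤ C t^{-(1/2)(1-1/p) - 1/2}` for the error-function kernel
`e(y,t)`. -/
theorem stmt_8 (a : ℝ) (ha : 0 < a) (p : ENNReal) (hp : 1 ≤ p) :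
    let g : ℝ → ℝ := fun z => Real.pi ^ (-(1:ℝ)/2) * Real.exp (-z^2)
    let errfn : ℝ → ℝ := fun z => ∫ w in Set.Iic z, g w
    let e : ℝ → ℝ → ℝ := fun y t =>
      errfn ((y + a*t) / Real.sqrt (4*(t+1))) - errfn ((y - a*t) / Real.sqrt (4*(t+1)))
    ∃ C > (0:ℝ), ∀ t : ℝ, 0 < t →
      MeasureTheory.eLpNorm
          (fun y => deriv (fun t' => deriv (fun y' => e y' t') y) t) p MeasureTheory.volume
        ≤ ENNReal.ofReal (C * t ^ (-(1/2 : ℝ) * (1 - 1/p.toReal) - 1/2)) := by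
  intro g errfn e
  refine ⟨2 * Real.sqrt (2*Real.pi) * (Real.pi ^ (-(1:ℝ)/2) * (2*a+5)),
    by positivity, ?_⟩
  obtain ⟨C, hC, h⟩ := st8_main a ha p hp
  exact h
end
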